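/- arXiv:2505.15762 — 5 statements merged into one kernel-verified Lean document; each statement's English description precedes it below -/
import Mathlib

section
/- Let K ⊂ ℝ^m be compact, B a subspace of C(K) spanned by real-valued functions, B_ℝ = B ∩ C_ℝ(K), and L a bounded linear operator from B to C(K) mapping B_ℝ into C_ℝ(K). Let ‖·‖ be a monotone norm on B (if |g| ≤ |h| pointwise on K then ‖g‖ ≤ ‖h‖). Then sup over nonzero h ∈ B of ‖L(h)‖_{C(K)}/‖h‖ equals the sup over nonzero real-valued g ∈ B_ℝ of ‖L(g)‖_{C(K)}/‖g‖. -/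
private lemma aux_abs_le (c s α β : ℝ) (hcs : c ^ 2 + s ^ 2 = 1) :
    ‖(c : ℂ) * α + (s : ℂ) * β‖ ≤ ‖(α : ℂ) + Complex.I * β‖ := by
  have h1 : ‖(c : ℂ) * α + (s : ℂ) * β‖ = |c * α + s * β| := by
    rw [show ((c : ℂ) * α + (s : ℂ) * β) = ((c * α + s * β : ℝ) : ℂ) by push_cast; ring,
      Complex.norm_real, Real.norm_eq_abs]
  have h2 : ‖(α : ℂ) + Complex.I * β‖ = Real.sqrt (α ^ 2 + β ^ 2) := by
    rw [Complex.norm_def, Complex.normSq_apply]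
    simp
    ring_nf
  rw [h1, h2, ← Real.sqrt_sq_eq_abs]
  apply Real.sqrt_le_sqrt
  nlinarith [sq_nonneg (s * α - c * β)]

/-- reduction of Markov–Bernstein–Nikolskii type extremal problems for
complex-valued functions to real-valued ones. `K` is a compact subset of ℝ^m, `B` a
subspace of `C(K, ℂ)` spanned by its real-valued elements, `L` a linear operator on `B`
with values in `C(K, ℂ)`, bounded with respect to a monotone norm `N` on `B`, mapping
real-valued functions to real-valued functions. -/
theorem complex_to_real_extremal_problem {m : ℕ}
    (K : Set (EuclideanSpace ℝ (Fin m))) [CompactSpace K]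
    (B : Submodule ℂ C(K, ℂ))
    (hspan : B = Submodule.span ℂ
      ((B : Set C(K, ℂ)) ∩ {f : C(K, ℂ) | ∀ x : K, (f x).im = 0}))
    (L : B →ₗ[ℂ] C(K, ℂ))
    (hreal : ∀ h : B, (∀ x : K, ((h : C(K, ℂ)) x).im = 0) → ∀ x : K, (L h x).im = 0)
    (N : C(K, ℂ) → ℝ)
    (hN_pos : ∀ h : B, (h : C(K, ℂ)) ≠ 0 → 0 < N h)
    (hN_mono : ∀ g h : C(K, ℂ), (∀ x : K, ‖g x‖ ≤ ‖h x‖) →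
      N g ≤ N h)
    (hbdd : ∃ C : ℝ, ∀ h : B, ‖L h‖ ≤ C * N h) :
    sSup {r : ℝ | ∃ h : B, (h : C(K, ℂ)) ≠ 0 ∧ r = ‖L h‖ / N h} =
      sSup {r : ℝ | ∃ h : B, (h : C(K, ℂ)) ≠ 0 ∧
        (∀ x : K, ((h : C(K, ℂ)) x).im = 0) ∧ r = ‖L h‖ / N h} := by
  classical
  -- Decomposition: every element of B is u + I • v with u, v real-valued elements of B
  have decomp : ∀ h : B, ∃ u v : B,
      (∀ x : K, ((u : C(K, ℂ)) x).im = 0) ∧ (∀ x : K, ((v : C(K, ℂ)) x).im = 0) ∧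
      (h : C(K, ℂ)) = (u : C(K, ℂ)) + Complex.I • (v : C(K, ℂ)) := by
    rintro ⟨h, hh⟩
    have hh' : h ∈ Submodule.span ℂ
        ((B : Set C(K, ℂ)) ∩ {f : C(K, ℂ) | ∀ x : K, (f x).im = 0}) := by
      rw [← hspan]; exact hh
    have key : ∀ f ∈ Submodule.span ℂ
        ((B : Set C(K, ℂ)) ∩ {f : C(K, ℂ) | ∀ x : K, (f x).im = 0}),
        ∃ u v : B, (∀ x : K, ((u : C(K, ℂ)) x).im = 0) ∧
          (∀ x : K, ((v : C(K, ℂ)) x).im = 0) ∧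
          f = (u : C(K, ℂ)) + Complex.I • (v : C(K, ℂ)) := by
      intro f hf
      refine Submodule.span_induction ?_ ?_ ?_ ?_ hf
      · rintro g ⟨hgB, hgreal⟩
        exact ⟨⟨g, hgB⟩, 0, hgreal, by simp, by simp⟩
      · exact ⟨0, 0, by simp, by simp, by simp⟩
      · rintro x y hx hy ⟨u1, v1, hu1, hv1, rfl⟩ ⟨u2, v2, hu2, hv2, rfl⟩
        refine ⟨u1 + u2, v1 + v2, ?_, ?_, ?_⟩
        · intro x; simp [hu1 x, hu2 x]
        · intro x; simp [hv1 x, hv2 x]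
        · push_cast
          module
      · rintro c x hx ⟨u, v, hu, hv, rfl⟩
        refine ⟨(c.re : ℂ) • u - (c.im : ℂ) • v, (c.im : ℂ) • u + (c.re : ℂ) • v, ?_, ?_, ?_⟩
        · intro x
          push_cast
          simp [Complex.add_im, Complex.sub_im, Complex.mul_im, hu x, hv x]
        · intro x
          push_cast
          simp [Complex.add_im, Complex.mul_im, hu x, hv x]
        · push_cast
          ext x
          simp only [ContinuousMap.add_apply, ContinuousMap.smul_apply, ContinuousMap.sub_apply,
            smul_eq_mul]
          rw [Complex.ext_iff]
          simp only [Complex.add_re, Complex.add_im, Complex.sub_re, Complex.sub_im,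
            Complex.mul_re, Complex.mul_im, Complex.I_re, Complex.I_im, Complex.ofReal_re,
            Complex.ofReal_im]
          constructor <;> ring
    exact key h hh'
  set S := {r : ℝ | ∃ h : B, (h : C(K, ℂ)) ≠ 0 ∧ r = ‖L h‖ / N h} with hSdef
  set T := {r : ℝ | ∃ h : B, (h : C(K, ℂ)) ≠ 0 ∧
      (∀ x : K, ((h : C(K, ℂ)) x).im = 0) ∧ r = ‖L h‖ / N h} with hTdef
  have hTS : T ⊆ S := by rintro r ⟨h, hne, _, rfl⟩; exact ⟨h, hne, rfl⟩
  obtain ⟨C, hC⟩ := hbdd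
  have hSbdd : BddAbove S := by
    refine ⟨C, ?_⟩
    rintro r ⟨h, hne, rfl⟩
    rw [div_le_iff₀ (hN_pos h hne)]
    exact hC h
  have hTbdd : BddAbove T := hSbdd.mono hTS
  by_cases hS : S.Nonempty
  · -- T is nonempty
    have hTne : T.Nonempty := by
      obtain ⟨r₀, h₀, h₀ne, rfl⟩ := hS
      obtain ⟨u, v, hu, hv, huv⟩ := decomp h₀
      by_cases hu0 : (u : C(K, ℂ)) = 0
      · have hv0 : (v : C(K, ℂ)) ≠ 0 := by
          intro h0
          exact h₀ne (by rw [huv, hu0, h0]; simp)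
        exact ⟨_, v, hv0, hv, rfl⟩
      · exact ⟨_, u, hu0, hu, rfl⟩
    have hT0 : 0 ≤ sSup T := by
      obtain ⟨r, hr⟩ := hTne
      refine le_trans ?_ (le_csSup hTbdd hr)
      obtain ⟨g, gne, _, rfl⟩ := hr
      exact div_nonneg (norm_nonneg _) (hN_pos g gne).le
    refine le_antisymm ?_ (csSup_le_csSup hSbdd hTne hTS)
    refine Real.sSup_le ?_ hT0
    rintro r ⟨h, hne, rfl⟩
    -- main argument
    obtain ⟨u, v, hu, hv, huv⟩ := decomp h
    have hK : Nonempty K := by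
      by_contra hKe
      exact hne (by ext x; exact absurd ⟨x⟩ hKe)
    have hB : h = u + Complex.I • v := Subtype.ext (by simpa using huv)
    have hLh : L h = L u + Complex.I • L v := by
      rw [hB, map_add, map_smul]
    -- maximizer of ‖L h‖
    obtain ⟨x₀, -, hx₀⟩ := isCompact_univ.exists_isMaxOn Set.univ_nonempty
      ((map_continuous (L h)).norm.continuousOn (s := Set.univ))
    have hnorm : ‖L h‖ = ‖(L h) x₀‖ := by
      refine le_antisymm ?_ ((L h).norm_coe_le_norm x₀)
      exact ((L h).norm_le (norm_nonneg _)).mpr fun x => hx₀ trivial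
    set a : ℝ := ((L u) x₀).re with ha
    set b : ℝ := ((L v) x₀).re with hb
    have hua : (L u) x₀ = (a : ℂ) := Complex.ext rfl (hreal u hu x₀)
    have hvb : (L v) x₀ = (b : ℂ) := Complex.ext rfl (hreal v hv x₀)
    set r : ℝ := ‖L h‖ with hrdef
    have hr2 : r ^ 2 = a ^ 2 + b ^ 2 := by
      have hxv : (L h) x₀ = (a : ℂ) + (b : ℂ) * Complex.I := by
        rw [hLh]; simp [hua, hvb]; ring
      rw [hnorm, hxv, Complex.sq_norm, Complex.normSq_apply]
      simp
      ring
    rcases eq_or_lt_of_le (norm_nonneg (L h)) with hr0 | hrpos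
    · have : r = 0 := hr0.symm
      rw [this]
      simpa using hT0
    · -- construct the real competitor g
      set c : ℝ := a / r with hc
      set s : ℝ := b / r with hs
      have hrne : r ≠ 0 := hrpos.ne'
      have hcs : c ^ 2 + s ^ 2 = 1 := by
        rw [hc, hs, div_pow, div_pow, ← add_div, ← hr2]
        exact div_self (pow_ne_zero 2 hrne)
      set g : B := (c : ℂ) • u + (s : ℂ) • v with hg
      have hgval : ∀ x : K, (g : C(K, ℂ)) x = (c : ℂ) * (u : C(K, ℂ)) x
          + (s : ℂ) * (v : C(K, ℂ)) x := by
        intro x; simp [hg]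
      have hgreal : ∀ x : K, ((g : C(K, ℂ)) x).im = 0 := by
        intro x
        rw [hgval x]
        simp [Complex.add_im, Complex.mul_im, hu x, hv x]
      have hLg : (L g) x₀ = ((c * a + s * b : ℝ) : ℂ) := by
        rw [hg, map_add, map_smul, map_smul]
        simp only [ContinuousMap.add_apply, ContinuousMap.smul_apply, smul_eq_mul, hua, hvb]
        push_cast
        ring
      have hcasb : c * a + s * b = r := by
        rw [hc, hs, div_mul_eq_mul_div, div_mul_eq_mul_div, ← add_div,
          ← sq, ← sq, ← hr2, sq, mul_div_assoc, div_self hrne, mul_one]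
      have hLgnorm : r ≤ ‖L g‖ := by
        calc r = ‖(L g) x₀‖ := by
              rw [hLg, hcasb, Complex.norm_real, Real.norm_eq_abs]
              exact (abs_of_pos (show (0:ℝ) < r from hrpos)).symm
        _ ≤ ‖L g‖ := (L g).norm_coe_le_norm x₀
      have hgne : (g : C(K, ℂ)) ≠ 0 := by
        intro h0
        have : g = 0 := Subtype.ext (by simpa using h0)
        rw [this] at hLgnorm
        simp at hLgnorm
        exact absurd hLgnorm (not_le.mpr hrpos)
      have hNg : N g ≤ N h := by
        refine hN_mono _ _ fun x => ?_
        rw [hgval x, huv]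
        simp only [ContinuousMap.add_apply, ContinuousMap.smul_apply]
        obtain ⟨α, huα⟩ : ∃ α : ℝ, (u : C(K, ℂ)) x = (α : ℂ) :=
          ⟨_, Complex.ext rfl (hu x)⟩
        obtain ⟨β, hvβ⟩ : ∃ β : ℝ, (v : C(K, ℂ)) x = (β : ℂ) :=
          ⟨_, Complex.ext rfl (hv x)⟩
        rw [huα, hvβ, smul_eq_mul]
        exact aux_abs_le c s α β hcs
      calc ‖L h‖ / N h = r / N h := rfl
      _ ≤ ‖L g‖ / N g := by
          apply div_le_div₀ (norm_nonneg _) hLgnorm (hN_pos g hgne) hNg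
      _ ≤ sSup T := le_csSup hTbdd ⟨g, hgne, hgreal, rfl⟩
  · have hSe : S = ∅ := Set.not_nonempty_iff_eq_empty.mp hS
    have hTe : T = ∅ := Set.eq_empty_of_subset_empty (hSe ▸ hTS)
    rw [hSe, hTe]
end

section
/- For every complex polynomial P of degree at most n, every b > 0, every l with 0 ≤ l ≤ n, and every real u with |u| > b, one has |P^(l)(u)| ≤ b^{−l} |T_n^{(l)}(u/b)| · max_{x∈[−b,b]} |P(x)|. -/
open Polynomial Finset Real

section Aux

/-- Degree bound for Chebyshev polynomials. -/
lemma cheb_degree_le (n : ℕ) : (Chebyshev.T ℝ (n : ℤ)).degree ≤ n := by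
  induction n using Nat.strong_induction_on with
  | _ n ih =>
    match n with
    | 0 => simp [Chebyshev.T_zero]
    | 1 => simpa [Chebyshev.T_one] using degree_X_le
    | (m+2) =>
      have h2 : ((m:ℤ)+2) = ((m+2 : ℕ) : ℤ) := by push_cast; ring
      have := Chebyshev.T_add_two ℝ (m : ℤ)
      rw [h2] at this
      rw [this]
      refine le_trans (degree_sub_le _ _) ?_
      have hm : (Chebyshev.T ℝ (m:ℤ)).degree ≤ m := ih m (by omega)
      have hm1 : (Chebyshev.T ℝ ((m:ℤ)+1)).degree ≤ ((m+1 : ℕ) : WithBot ℕ) := by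
        have : ((m:ℤ)+1) = ((m+1 : ℕ) : ℤ) := by push_cast; ring
        rw [this]; exact ih (m+1) (by omega)
      have hX : (2 * X * Chebyshev.T ℝ ((m:ℤ)+1)).degree ≤ ((m+2 : ℕ) : WithBot ℕ) := by
        refine le_trans (degree_mul_le _ _) ?_
        refine le_trans (add_le_add (degree_mul_le _ _) le_rfl) ?_
        refine le_trans (add_le_add (add_le_add degree_C_le degree_X_le) hm1) ?_
        rw [zero_add]
        exact_mod_cast (by omega : 1 + (m+1) ≤ m+2)
      refine max_le hX (le_trans hm ?_)
      exact_mod_cast (by omega : m ≤ m+2)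

lemma derivative_prod_X_sub_C' {R : Type*} [CommRing R] {ι : Type*} [DecidableEq ι]
    (s : Finset ι) (r : ι → R) :
    derivative (∏ i ∈ s, (X - C (r i))) = ∑ i ∈ s, ∏ j ∈ s.erase i, (X - C (r j)) := by
  rw [Finset.prod_eq_multiset_prod, Polynomial.derivative_prod, Finset.sum_eq_multiset_sum]
  congr 1
  refine Multiset.map_congr rfl fun i hi => ?_
  rw [derivative_X_sub_C, mul_one, ← Finset.erase_val, ← Finset.prod_eq_multiset_prod]

lemma iterate_derivative_comp_C_mul_X {R : Type*} [CommRing R] (a : R) (l : ℕ) (p : R[X]) :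
    derivative^[l] (p.comp (C a * X)) = C (a^l) * (derivative^[l] p).comp (C a * X) := by
  induction l generalizing p with
  | zero => simp
  | succ l ih =>
    rw [Function.iterate_succ_apply, derivative_comp]
    have : derivative (C a * X) = C a := by simp
    rw [this, iterate_derivative_C_mul, ih, Function.iterate_succ_apply,
      ← mul_assoc, ← C_mul, pow_succ']

/-- sign of the `l`-th derivative of a product of linear factors with roots in `[-b,b]`,
evaluated outside the interval. -/
lemma sign_lemma {b : ℝ} (hb : 0 < b) :
    ∀ (l : ℕ) {ι : Type*} [DecidableEq ι] (s : Finset ι) (r : ι → ℝ),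
    (∀ i ∈ s, r i ∈ Set.Icc (-b) b) → ∀ x : ℝ, b < |x| →
    0 ≤ (if 0 < x then 1 else (-1:ℝ)^(s.card - l)) *
      (derivative^[l] (∏ i ∈ s, (X - C (r i)))).eval x := by
  intro l
  induction l with
  | zero =>
    intro ι _ s r hr x hx
    simp only [Function.iterate_zero, id, Nat.sub_zero, eval_prod, eval_sub, eval_X, eval_C]
    by_cases hx0 : 0 < x
    · rw [if_pos hx0, one_mul]
      refine Finset.prod_nonneg fun i hi => ?_
      have : r i ≤ b := (hr i hi).2
      have hbx : b < x := by rwa [abs_of_pos hx0] at hx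
      linarith
    · rw [if_neg hx0]
      push_neg at hx0
      have hxb : x < -b := by
        rcases abs_cases x with ⟨h1, _⟩ | ⟨h1, _⟩
        · nlinarith
        · rw [h1] at hx; linarith
      have hpos : ∀ i ∈ s, 0 < r i - x := fun i hi => by
        have := (hr i hi).1; linarith
      have hprod : ∏ i ∈ s, (x - r i) = (-1:ℝ)^s.card * ∏ i ∈ s, (r i - x) := by
        rw [← Finset.prod_const, ← Finset.prod_mul_distrib]
        exact Finset.prod_congr rfl fun i _ => by ring
      rw [hprod, ← mul_assoc, ← pow_add]
      have : Even (s.card + s.card) := ⟨s.card, by ring⟩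
      rw [this.neg_one_pow, one_mul]
      exact Finset.prod_nonneg fun i hi => (hpos i hi).le
  | succ l ih =>
    intro ι _ s r hr x hx
    rw [Function.iterate_succ_apply, derivative_prod_X_sub_C', iterate_derivative_sum,
      eval_finset_sum, Finset.mul_sum]
    refine Finset.sum_nonneg fun i hi => ?_
    have hcard : s.card - (l+1) = (s.erase i).card - l := by
      rw [Finset.card_erase_of_mem hi]; omega
    rw [hcard]
    exact ih (s.erase i) r (fun j hj => hr j (Finset.mem_of_mem_erase hj)) x hx

end Aux

/-- a Chebyshev-type estimate for derivatives of a complex polynomial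
outside the interval [−b, b]. -/
theorem chebyshev_derivative_bound_outside (n : ℕ) (P : Polynomial ℂ)
    (hdeg : P.degree ≤ n) (b : ℝ) (hb : 0 < b) (l : ℕ) (hl : l ≤ n)
    (u : ℝ) (hu : b < |u|) :
    ‖(Polynomial.derivative^[l] P).eval (u : ℂ)‖ ≤
      b ^ (-(l : ℤ)) * |(Polynomial.derivative^[l] (Chebyshev.T ℝ n)).eval (u / b)| *
        sSup ((fun x : ℝ => ‖P.eval (x : ℂ)‖) '' Set.Icc (-b) b) := by
  classical
  set M := sSup ((fun x : ℝ => ‖P.eval (x : ℂ)‖) '' Set.Icc (-b) b) with hM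
  set y : ℕ → ℝ := fun k => b * Real.cos (k * Real.pi / n) with hy
  set s : Finset ℕ := Finset.range (n+1) with hs
  -- nodes lie in the interval
  have hyIcc : ∀ k, y k ∈ Set.Icc (-b) b := by
    intro k
    have h1 := Real.neg_one_le_cos (k * Real.pi / n)
    have h2 := Real.cos_le_one (k * Real.pi / n)
    constructor
    · show -b ≤ b * Real.cos _
      nlinarith
    · show b * Real.cos _ ≤ b
      nlinarith
  -- nodes are strictly decreasing
  have hmono : ∀ {j k : ℕ}, k ≤ n → j < k → y k < y j := by
    intro j k hk hjk
    have hn : 0 < n := by omega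
    have hθj : (j : ℝ) * Real.pi / n ∈ Set.Icc 0 Real.pi := by
      constructor
      · positivity
      · rw [div_le_iff₀ (by positivity)]
        have : (j : ℝ) ≤ n := by exact_mod_cast (by omega : j ≤ n)
        nlinarith [Real.pi_pos]
    have hθk : (k : ℝ) * Real.pi / n ∈ Set.Icc 0 Real.pi := by
      constructor
      · positivity
      · rw [div_le_iff₀ (by positivity)]
        have : (k : ℝ) ≤ n := by exact_mod_cast hk
        nlinarith [Real.pi_pos]
    have hlt : (j : ℝ) * Real.pi / n < (k : ℝ) * Real.pi / n := by
      have : (j:ℝ) < k := by exact_mod_cast hjk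
      have := Real.pi_pos
      gcongr
    have := Real.strictAntiOn_cos hθj hθk hlt
    simp only [hy]
    nlinarith
  have hinj : Set.InjOn y s := by
    intro a ha c hc hac
    simp only [hs, Finset.coe_range, Set.mem_Iio] at ha hc
    by_contra hne
    rcases Nat.lt_or_ge a c with h | h
    · exact (ne_of_gt (hmono (by omega) h)) hac
    · have h2 : c < a := by omega
      exact (ne_of_lt (hmono (by omega) h2)) hac
  -- bounds via the sup
  have hcont : Continuous fun x : ℝ => ‖P.eval (x : ℂ)‖ :=
    continuous_norm.comp (P.continuous.comp Complex.continuous_ofReal)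
  have hbdd : BddAbove ((fun x : ℝ => ‖P.eval (x : ℂ)‖) '' Set.Icc (-b) b) :=
    ((isCompact_Icc).image hcont).bddAbove
  have hPM : ∀ k, ‖P.eval ((y k : ℝ) : ℂ)‖ ≤ M := fun k =>
    le_csSup hbdd ⟨y k, hyIcc k, rfl⟩
  have hM0 : 0 ≤ M := le_trans (norm_nonneg _) (hPM 0)
  -- denominators and numerators of the Lagrange basis
  set D : ℕ → ℝ := fun k => ∏ j ∈ s.erase k, (y k - y j) with hDdef
  set Q : ℕ → ℝ[X] := fun k => ∏ j ∈ s.erase k, (X - C (y j)) with hQdef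
  have hbasis : ∀ k, Lagrange.basis s y k = C (D k)⁻¹ * Q k := by
    intro k
    unfold Lagrange.basis Lagrange.basisDivisor
    rw [Finset.prod_mul_distrib, ← Finset.prod_inv_distrib, ← map_prod]
  have hDpos : ∀ k ∈ s, 0 < (-1:ℝ)^k * D k := by
    intro k hk
    have hkn : k ≤ n := by simpa [hs, Nat.lt_succ_iff] using hk
    set g : ℕ → ℝ := fun j => if j < k then y j - y k else y k - y j with hg
    have hgpos : ∀ j ∈ s.erase k, 0 < g j := by
      intro j hj
      rcases Finset.mem_erase.mp hj with ⟨hjk, hjs⟩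
      have hjn : j ≤ n := by simpa [hs, Nat.lt_succ_iff] using hjs
      by_cases h : j < k
      · simp only [hg, if_pos h]
        linarith [hmono hkn h]
      · have h2 : k < j := by omega
        simp only [hg, if_neg h]
        linarith [hmono hjn h2]
    have hDg : D k = (-1:ℝ)^k * ∏ j ∈ s.erase k, g j := by
      have hcongr : ∀ j ∈ s.erase k, y k - y j = (if j < k then (-1:ℝ) else 1) * g j := by
        intro j hj
        by_cases h : j < k <;> simp [hg, h] <;> ring
      show ∏ j ∈ s.erase k, (y k - y j) = _
      rw [Finset.prod_congr rfl hcongr, Finset.prod_mul_distrib]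
      congr 1
      rw [Finset.prod_ite, Finset.prod_const, Finset.prod_const, one_pow, mul_one]
      congr 1
      have hfil : (s.erase k).filter (· < k) = Finset.range k := by
        ext j
        simp only [hs, Finset.mem_filter, Finset.mem_erase, Finset.mem_range]
        omega
      rw [hfil, Finset.card_range]
    rw [hDg, ← mul_assoc, ← pow_add]
    have hev : Even (k + k) := ⟨k, by ring⟩
    rw [hev.neg_one_pow, one_mul]
    exact Finset.prod_pos hgpos
  -- complex interpolation of P
  set yC : ℕ → ℂ := fun k => ((y k : ℝ) : ℂ) with hyC
  have hinjC : Set.InjOn yC s := by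
    intro a ha c hc h
    apply hinj ha hc
    have h2 : ((y a : ℝ) : ℂ) = ((y c : ℝ) : ℂ) := h
    exact_mod_cast h2
  have hdegP : P.degree < (s.card : ℕ) := by
    rw [hs, Finset.card_range]
    exact lt_of_le_of_lt hdeg (by exact_mod_cast Nat.lt_succ_self n)
  have hP : P = ∑ k ∈ s, C (P.eval (yC k)) * Lagrange.basis s yC k := by
    have h := Lagrange.eq_interpolate hinjC hdegP
    rwa [Lagrange.interpolate_apply] at h
  have hbasisC : ∀ k, Lagrange.basis s yC k = (Lagrange.basis s y k).map (algebraMap ℝ ℂ) := by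
    intro k
    unfold Lagrange.basis Lagrange.basisDivisor
    rw [Polynomial.map_prod]
    refine Finset.prod_congr rfl fun j hj => ?_
    simp only [Polynomial.map_mul, Polynomial.map_sub, map_C, Polynomial.map_X, hyC,
      Complex.coe_algebraMap]
    push_cast
    ring
  -- real interpolation of the scaled Chebyshev polynomial
  set Tn : ℝ[X] := Chebyshev.T ℝ (n : ℤ) with hT
  set S : ℝ[X] := Tn.comp (C b⁻¹ * X) with hSdef
  have hdegS : S.degree < (s.card : ℕ) := by
    rw [hs, Finset.card_range]
    have h1 : S.natDegree ≤ n := by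
      rw [hSdef, natDegree_comp]
      have ht : Tn.natDegree ≤ n := natDegree_le_iff_degree_le.mpr (cheb_degree_le n)
      have h2 : (C b⁻¹ * X : ℝ[X]).natDegree ≤ 1 := natDegree_mul_le.trans (by simp)
      calc Tn.natDegree * (C b⁻¹ * X).natDegree ≤ n * 1 := Nat.mul_le_mul ht h2
      _ = n := by ring
    calc S.degree ≤ (S.natDegree : WithBot ℕ) := degree_le_natDegree
    _ ≤ (n : WithBot ℕ) := by exact_mod_cast h1
    _ < ((n+1 : ℕ) : WithBot ℕ) := by exact_mod_cast Nat.lt_succ_self n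
  have hSval : ∀ k ∈ s, S.eval (y k) = (-1:ℝ)^k := by
    intro k hk
    have harg : b⁻¹ * y k = Real.cos (k * Real.pi / n) := by
      show b⁻¹ * (b * _) = _
      rw [inv_mul_cancel_left₀ hb.ne']
    have h1 : S.eval (y k) = Tn.eval (Real.cos (k * Real.pi / n)) := by
      rw [hSdef, eval_comp, eval_mul, eval_C, eval_X, harg]
    rw [h1, hT, Chebyshev.T_real_cos]
    rcases Nat.eq_zero_or_pos n with hn | hn
    · have hk0 : k = 0 := by
        rw [hs, hn] at hk
        simpa using hk
      subst hk0
      simp [hn]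
    · have h2 : ((n:ℤ) : ℝ) * ((k:ℝ) * Real.pi / n) = k * Real.pi := by
        have : (n:ℝ) ≠ 0 := Nat.cast_ne_zero.mpr (by omega)
        push_cast
        field_simp
      rw [h2]
      have h3 := Real.cos_nat_mul_pi_sub 0 k
      simpa using h3
  have hS : S = ∑ k ∈ s, C ((-1:ℝ)^k) * Lagrange.basis s y k := by
    have h := Lagrange.eq_interpolate hinj hdegS
    rw [Lagrange.interpolate_apply] at h
    rw [h]
    exact Finset.sum_congr rfl fun k hk => by rw [hSval k hk]
  -- the sign unit
  set e : ℝ := if 0 < u then 1 else (-1:ℝ)^(n - l) with he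
  have habse : |e| = 1 := by
    rw [he]
    split
    · simp
    · rw [abs_pow, abs_neg, abs_one, one_pow]
  -- key complex identity
  have hkey : (derivative^[l] P).eval (u : ℂ) =
      ∑ k ∈ s, P.eval (yC k) * (((derivative^[l] (Lagrange.basis s y k)).eval u : ℝ) : ℂ) := by
    conv_lhs => rw [hP]
    rw [iterate_derivative_sum, eval_finset_sum]
    refine Finset.sum_congr rfl fun k hk => ?_
    rw [iterate_derivative_C_mul, eval_mul, eval_C, hbasisC k, iterate_derivative_map]
    congr 1
    rw [eval_map]
    have h2 : ((u : ℝ) : ℂ) = algebraMap ℝ ℂ u := rfl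
    rw [h2, eval₂_hom]
    rfl
  -- per-index absolute value identity
  have habs : ∀ k ∈ s, |(derivative^[l] (Lagrange.basis s y k)).eval u| =
      e * ((-1:ℝ)^k * (derivative^[l] (Lagrange.basis s y k)).eval u) := by
    intro k hk
    rw [hbasis k, iterate_derivative_C_mul, eval_mul, eval_C]
    have hq0 := sign_lemma hb l (s.erase k) y (fun j _ => hyIcc j) u hu
    have hcard : (s.erase k).card - l = n - l := by
      rw [Finset.card_erase_of_mem hk, hs, Finset.card_range]
      omega
    rw [hcard] at hq0
    have hq : 0 ≤ e * (derivative^[l] (Q k)).eval u := by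
      rw [he]; exact hq0
    have habsq : |(derivative^[l] (Q k)).eval u| = e * (derivative^[l] (Q k)).eval u := by
      have h3 : |e * (derivative^[l] (Q k)).eval u| = |(derivative^[l] (Q k)).eval u| := by
        rw [abs_mul, habse, one_mul]
      rw [← h3, abs_of_nonneg hq]
    have hDk := hDpos k hk
    have hinvk : ((-1:ℝ)^k)⁻¹ = (-1:ℝ)^k := by
      rcases Nat.even_or_odd k with h | h
      · rw [h.neg_one_pow]; norm_num
      · rw [h.neg_one_pow]; norm_num
    have hDabs : |(D k)⁻¹| = (-1:ℝ)^k * (D k)⁻¹ := by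
      rw [abs_inv]
      have h4 : |D k| = (-1:ℝ)^k * D k := by
        have h5 : |(-1:ℝ)^k * D k| = |D k| := by
          rw [abs_mul, abs_pow, abs_neg, abs_one, one_pow, one_mul]
        rw [← h5, abs_of_pos hDk]
      rw [h4, mul_inv, hinvk]
    rw [abs_mul, hDabs, habsq]
    ring
  -- summing the basis identity gives the scaled Chebyshev polynomial
  have hsum : ∑ k ∈ s, (-1:ℝ)^k * (derivative^[l] (Lagrange.basis s y k)).eval u
      = (derivative^[l] S).eval u := by
    rw [hS, iterate_derivative_sum, eval_finset_sum]
    exact Finset.sum_congr rfl fun k hk => by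
      rw [iterate_derivative_C_mul, eval_mul, eval_C]
  have hSu : (derivative^[l] S).eval u = (b⁻¹)^l * (derivative^[l] Tn).eval (u / b) := by
    rw [hSdef, iterate_derivative_comp_C_mul_X, eval_mul, eval_C, eval_comp, eval_mul,
      eval_C, eval_X, inv_mul_eq_div]
  have hbl : b ^ (-(l:ℤ)) = (b⁻¹)^l := by
    rw [zpow_neg, zpow_natCast, inv_pow]
  calc ‖(derivative^[l] P).eval (u:ℂ)‖
      = ‖∑ k ∈ s, P.eval (yC k) *
        (((derivative^[l] (Lagrange.basis s y k)).eval u : ℝ) : ℂ)‖ := by rw [hkey]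
    _ ≤ ∑ k ∈ s, ‖P.eval (yC k) *
        (((derivative^[l] (Lagrange.basis s y k)).eval u : ℝ) : ℂ)‖ :=
      norm_sum_le s _
    _ = ∑ k ∈ s, ‖P.eval (yC k)‖ *
        |(derivative^[l] (Lagrange.basis s y k)).eval u| := by
      refine Finset.sum_congr rfl fun k hk => ?_
      rw [norm_mul, Complex.norm_real, Real.norm_eq_abs]
    _ ≤ ∑ k ∈ s, M * |(derivative^[l] (Lagrange.basis s y k)).eval u| :=
      Finset.sum_le_sum fun k hk => mul_le_mul_of_nonneg_right (hPM k) (abs_nonneg _)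
    _ = M * ∑ k ∈ s, |(derivative^[l] (Lagrange.basis s y k)).eval u| := by
      rw [Finset.mul_sum]
    _ = M * (e * ∑ k ∈ s, (-1:ℝ)^k * (derivative^[l] (Lagrange.basis s y k)).eval u) := by
      rw [Finset.sum_congr rfl habs, ← Finset.mul_sum]
    _ = M * (e * (derivative^[l] S).eval u) := by rw [hsum]
    _ ≤ M * |(derivative^[l] S).eval u| := by
      refine mul_le_mul_of_nonneg_left ?_ hM0
      calc e * (derivative^[l] S).eval u ≤ |e * (derivative^[l] S).eval u| := le_abs_self _
        _ = |(derivative^[l] S).eval u| := by rw [abs_mul, habse, one_mul]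
    _ = M * ((b⁻¹)^l * |(derivative^[l] Tn).eval (u/b)|) := by
      rw [hSu, abs_mul, abs_pow, abs_inv, abs_of_pos hb]
    _ = b ^ (-(l:ℤ)) * |(derivative^[l] Tn).eval (u/b)| * M := by
      rw [hbl]; ring
end

section
/- Let V ⊂ ℝ^m be a centrally symmetric convex body with width w(V), and P a complex polynomial in m variables of total degree at most n. Then for every x ∈ ℝ^m \ V, |P(x)| ≤ T_n(2|x|/w(V)) · max_{y∈V} |P(y)|. -/
open Polynomial

section ChebAux
open Real Finset

noncomputable def chebNode (n : ℕ) (k : Fin (n+1)) : ℝ := Real.cos (k * π / n)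

lemma chebNode_mem (n : ℕ) (k : Fin (n+1)) : chebNode n k ∈ Set.Icc (-1:ℝ) 1 :=
  ⟨Real.neg_one_le_cos _, Real.cos_le_one _⟩

lemma aux_mem (n : ℕ) (hn : 0 < n) (k : Fin (n+1)) : (k : ℝ) * π / n ∈ Set.Icc 0 π := by
  constructor
  · positivity
  · rw [div_le_iff₀ (by positivity)]
    have hk : (k : ℝ) ≤ n := by exact_mod_cast Nat.lt_succ_iff.mp k.isLt
    nlinarith [Real.pi_pos]

lemma chebNode_strictAnti (n : ℕ) : StrictAnti (chebNode n) := by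
  intro j k hjk
  rcases Nat.eq_zero_or_pos n with h0 | hn
  · omega
  · apply Real.strictAntiOn_cos (aux_mem n hn j) (aux_mem n hn k)
    have : (j : ℝ) < k := by exact_mod_cast hjk
    have : (0:ℝ) < n := by exact_mod_cast hn
    have := Real.pi_pos
    gcongr

lemma chebNode_inj (n : ℕ) : Function.Injective (chebNode n) := (chebNode_strictAnti n).injective

lemma chebNode_T_eval (n : ℕ) (k : Fin (n+1)) :
    (Chebyshev.T ℝ n).eval (chebNode n k) = (-1 : ℝ) ^ (k : ℕ) := by
  rcases Nat.eq_zero_or_pos n with h0 | hn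
  · subst h0
    have : (k : ℕ) = 0 := by omega
    simp [this, chebNode]
  · rw [chebNode, Chebyshev.T_real_cos]
    have hne : (n : ℝ) ≠ 0 := by exact_mod_cast hn.ne'
    have : ((n : ℤ) : ℝ) * ((k : ℝ) * π / n) = k * π := by
      push_cast; field_simp
    rw [this]
    have h2 := Real.cos_add_int_mul_pi 0 (k : ℤ)
    simpa using h2

lemma lagrange_rep {F : Type*} [Field F] {n : ℕ} (x : Fin (n+1) → F)
    (hx : Function.Injective x) (q : F[X]) (hq : q.degree < ((n+1 : ℕ) : WithBot ℕ)) (t : F) :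
    q.eval t = ∑ k : Fin (n+1), q.eval (x k) * (Lagrange.basis Finset.univ x k).eval t := by
  conv_lhs => rw [Lagrange.eq_interpolate (s := Finset.univ) (f := q) (hx.injOn) (by simpa using hq)]
  rw [Lagrange.interpolate_apply, eval_finset_sum]
  simp [eval_mul]

lemma basis_eval_eq {F : Type*} [Field F] {n : ℕ} (x : Fin (n+1) → F) (k : Fin (n+1)) (t : F) :
    (Lagrange.basis Finset.univ x k).eval t
      = ∏ j ∈ Finset.univ.erase k, ((x k - x j)⁻¹ * (t - x j)) := by
  rw [Lagrange.basis, eval_prod]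
  refine Finset.prod_congr rfl fun j _ => ?_
  simp [Lagrange.basisDivisor]

lemma T_natDegree_le (R : Type*) [CommRing R] : ∀ n : ℕ, (Chebyshev.T R n).natDegree ≤ n := by
  intro n
  induction n using Nat.strong_induction_on with
  | _ n ih =>
    match n with
    | 0 => simp
    | 1 => simp [Polynomial.natDegree_X_le]
    | (n+2) =>
      have h1 := ih (n+1) (by omega)
      have h0 := ih n (by omega)
      rw [show ((n+2:ℕ):ℤ) = (n:ℤ)+2 from by push_cast; ring, Chebyshev.T_add_two]
      refine le_trans (Polynomial.natDegree_sub_le _ _) (max_le ?_ ?_)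
      · refine le_trans (Polynomial.natDegree_mul_le) ?_
        have : ((2 : R[X]) * X).natDegree ≤ 1 :=
          le_trans Polynomial.natDegree_mul_le (by simp [Polynomial.natDegree_X_le])
        have h1' : (Chebyshev.T R ((n:ℤ)+1)).natDegree ≤ n + 1 := by
          rw [show ((n:ℤ)+1) = ((n+1:ℕ):ℤ) from by push_cast; ring]; exact h1
        omega
      · rw [show ((n:ℤ)) = ((n:ℕ):ℤ) from rfl]; omega

lemma T_degree_lt (n : ℕ) : (Chebyshev.T ℝ n).degree < ((n+1 : ℕ) : WithBot ℕ) := by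
  have h := T_natDegree_le ℝ n
  calc (Chebyshev.T ℝ n).degree ≤ ((Chebyshev.T ℝ n).natDegree : WithBot ℕ) :=
        Polynomial.degree_le_natDegree
    _ < ((n+1 : ℕ) : WithBot ℕ) := by
        rw [Nat.cast_lt]
        exact Nat.lt_succ_of_le h

lemma prod_neg' {k : ℕ} {s : Finset (Fin (k+1))} (f : Fin (k+1) → ℝ) :
    ∏ j ∈ s, (-(f j)) = (-1:ℝ) ^ s.card * ∏ j ∈ s, f j := by
  rw [show (∏ j ∈ s, (-(f j))) = ∏ j ∈ s, ((-1:ℝ) * f j) from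
    Finset.prod_congr rfl fun j _ => by ring]
  rw [Finset.prod_mul_distrib, Finset.prod_const]

lemma erase_eq_Iio_union_Ioi {n : ℕ} (k : Fin (n+1)) :
    Finset.univ.erase k = Finset.Iio k ∪ Finset.Ioi k := by
  ext j
  simp only [Finset.mem_erase, Finset.mem_union, Finset.mem_Iio, Finset.mem_Ioi,
    Finset.mem_univ, and_true]
  exact ne_iff_lt_or_gt

lemma L_sign {n : ℕ} (k : Fin (n+1)) {t : ℝ} (ht : 1 < t) :
    0 ≤ (-1:ℝ) ^ (k:ℕ) *
      ∏ j ∈ Finset.univ.erase k, ((chebNode n k - chebNode n j)⁻¹ * (t - chebNode n j)) := by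
  set x := chebNode n with hx
  set B := ∏ j ∈ Finset.univ.erase k, (t - x j) with hBdef
  set C := ∏ j ∈ Finset.Iio k, (x j - x k) with hCdef
  set D := ∏ j ∈ Finset.Ioi k, (x k - x j) with hDdef
  have hB : 0 < B := by
    refine Finset.prod_pos fun j _ => ?_
    have := (chebNode_mem n j).2; linarith
  have hC : 0 < C := by
    refine Finset.prod_pos fun j hj => ?_
    have := chebNode_strictAnti n (Finset.mem_Iio.mp hj); linarith
  have hD : 0 < D := by
    refine Finset.prod_pos fun j hj => ?_
    have := chebNode_strictAnti n (Finset.mem_Ioi.mp hj); linarith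
  have hdisj : Disjoint (Finset.Iio k) (Finset.Ioi k) := by
    rw [Finset.disjoint_left]
    intro a ha hb
    exact absurd (Finset.mem_Ioi.mp hb) (not_lt.mpr (Finset.mem_Iio.mp ha).le)
  have hsplit : ∏ j ∈ Finset.univ.erase k, (x k - x j) = (-1:ℝ)^(k:ℕ) * (C * D) := by
    rw [erase_eq_Iio_union_Ioi, Finset.prod_union hdisj]
    have : ∏ j ∈ Finset.Iio k, (x k - x j) = ∏ j ∈ Finset.Iio k, (-(x j - x k)) :=
      Finset.prod_congr rfl fun j _ => by ring
    rw [this, prod_neg', Fin.card_Iio, hCdef, hDdef]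
    ring
  rw [Finset.prod_mul_distrib, Finset.prod_inv_distrib, hsplit]
  have h1 : ((-1:ℝ)^(k:ℕ))⁻¹ = (-1:ℝ)^(k:ℕ) := by
    rw [← inv_pow, inv_neg, inv_one]
  have hsq : ((-1:ℝ)^(k:ℕ))^2 = 1 := by
    rw [← pow_mul, pow_mul']
    norm_num
  have goal_eq : (-1:ℝ)^(k:ℕ) * (((-1:ℝ)^(k:ℕ) * (C*D))⁻¹ * B) = (C*D)⁻¹ * B := by
    rw [mul_inv, h1]
    calc (-1:ℝ)^(k:ℕ) * ((-1:ℝ)^(k:ℕ) * (C*D)⁻¹ * B)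
        = ((-1:ℝ)^(k:ℕ))^2 * ((C*D)⁻¹ * B) := by ring
      _ = (C*D)⁻¹ * B := by rw [hsq, one_mul]
  rw [goal_eq]
  exact mul_nonneg (inv_nonneg.mpr (mul_nonneg hC.le hD.le)) hB.le

lemma sum_L_eq (n : ℕ) (t : ℝ) :
    ∑ k : Fin (n+1), (-1:ℝ)^(k:ℕ) *
        ∏ j ∈ Finset.univ.erase k, ((chebNode n k - chebNode n j)⁻¹ * (t - chebNode n j))
      = (Chebyshev.T ℝ n).eval t := by
  have h := lagrange_rep (chebNode n) (chebNode_inj n) (Chebyshev.T ℝ n) (T_degree_lt n) t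
  rw [h]
  refine Finset.sum_congr rfl fun k _ => ?_
  rw [chebNode_T_eval, basis_eval_eq]

lemma basis_eval_complex (n : ℕ) (k : Fin (n+1)) (t : ℝ) :
    (Lagrange.basis Finset.univ (fun j => ((chebNode n j : ℝ) : ℂ)) k).eval (t:ℂ)
      = ((∏ j ∈ Finset.univ.erase k,
          ((chebNode n k - chebNode n j)⁻¹ * (t - chebNode n j)) : ℝ) : ℂ) := by
  rw [basis_eval_eq]
  push_cast
  rfl

lemma cheb_growth (n : ℕ) (q : ℂ[X]) (hq : q.degree < ((n+1:ℕ) : WithBot ℕ)) (M : ℝ)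
    (hM : ∀ s : ℝ, |s| ≤ 1 → ‖q.eval (s:ℂ)‖ ≤ M) {t : ℝ} (ht : 1 ≤ t) :
    ‖q.eval (t:ℂ)‖ ≤ (Chebyshev.T ℝ n).eval t * M := by
  have hM0 : 0 ≤ M := le_trans (norm_nonneg _) (hM 0 (by norm_num))
  rcases eq_or_lt_of_le ht with h1 | h1
  · have hT1 : (Chebyshev.T ℝ n).eval 1 = 1 := by
      have h := Chebyshev.T_real_cos 0 (n : ℤ)
      simpa using h
    rw [← h1, hT1, one_mul]
    exact hM 1 (by norm_num)
  · have hinj : Function.Injective (fun j : Fin (n+1) => ((chebNode n j : ℝ) : ℂ)) :=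
      fun a b hab => chebNode_inj n (Complex.ofReal_injective (by simpa using hab))
    have hrep := lagrange_rep _ hinj q hq (t:ℂ)
    rw [hrep]
    set L : Fin (n+1) → ℝ := fun k => ∏ j ∈ Finset.univ.erase k,
      ((chebNode n k - chebNode n j)⁻¹ * (t - chebNode n j)) with hL
    have hLk : ∀ k : Fin (n+1),
        ‖(((L k : ℝ)):ℂ)‖ = (-1:ℝ)^(k:ℕ) * L k := by
      intro k
      rw [Complex.norm_real, Real.norm_eq_abs]
      calc |L k| = |(-1:ℝ)^(k:ℕ) * L k| := by
            rw [abs_mul, abs_pow, abs_neg, abs_one, one_pow, one_mul]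
        _ = (-1:ℝ)^(k:ℕ) * L k := abs_of_nonneg (L_sign k h1)
    calc ‖∑ k : Fin (n+1), q.eval ((chebNode n k : ℝ):ℂ) *
            (Lagrange.basis Finset.univ (fun j => ((chebNode n j : ℝ):ℂ)) k).eval (t:ℂ)‖
        ≤ ∑ k : Fin (n+1), ‖q.eval ((chebNode n k : ℝ):ℂ) *
            (Lagrange.basis Finset.univ (fun j => ((chebNode n j : ℝ):ℂ)) k).eval (t:ℂ)‖ :=
          norm_sum_le _ _
      _ ≤ ∑ k : Fin (n+1), M * ((-1:ℝ)^(k:ℕ) * L k) := by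
          refine Finset.sum_le_sum fun k _ => ?_
          rw [norm_mul, basis_eval_complex, hLk k]
          have hq1 : ‖q.eval ((chebNode n k : ℝ):ℂ)‖ ≤ M := by
            refine hM _ (abs_le.mpr ?_)
            exact ⟨(chebNode_mem n k).1, (chebNode_mem n k).2⟩
          have hpos : 0 ≤ (-1:ℝ)^(k:ℕ) * L k := by
            rw [← hLk k]; exact norm_nonneg _
          exact mul_le_mul_of_nonneg_right hq1 hpos
      _ = (Chebyshev.T ℝ n).eval t * M := by
          rw [← Finset.mul_sum, sum_L_eq, mul_comm]

lemma restrict_natDegree_le {m : ℕ} (P : MvPolynomial (Fin m) ℂ) (g : Fin m → ℂ[X])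
    (hg : ∀ i, (g i).natDegree ≤ 1) :
    (MvPolynomial.eval₂ Polynomial.C g P).natDegree ≤ P.totalDegree := by
  rw [MvPolynomial.eval₂_eq]
  refine Polynomial.natDegree_sum_le_of_forall_le _ _ fun d hd => ?_
  refine le_trans (Polynomial.natDegree_C_mul_le _ _) ?_
  calc (∏ i ∈ d.support, g i ^ d i).natDegree
      ≤ ∑ i ∈ d.support, (g i ^ d i).natDegree := Polynomial.natDegree_prod_le _ _
    _ ≤ ∑ i ∈ d.support, d i := Finset.sum_le_sum fun i _ =>
        le_trans Polynomial.natDegree_pow_le (by have := hg i; nlinarith)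
    _ ≤ P.totalDegree := MvPolynomial.le_totalDegree hd

lemma restrict_eval {m : ℕ} (P : MvPolynomial (Fin m) ℂ) (c : Fin m → ℝ) (z : ℂ) :
    (MvPolynomial.eval₂ Polynomial.C
        (fun i => Polynomial.C ((c i : ℝ):ℂ) * Polynomial.X) P).eval z
      = MvPolynomial.eval (fun i => ((c i : ℝ):ℂ) * z) P := by
  have h := MvPolynomial.eval₂_comp_left (Polynomial.evalRingHom z)
    (Polynomial.C : ℂ →+* ℂ[X]) (fun i => Polynomial.C ((c i : ℝ):ℂ) * Polynomial.X) P
  have h2 : (Polynomial.evalRingHom z).comp (Polynomial.C : ℂ →+* ℂ[X]) = RingHom.id ℂ := by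
    ext a; simp
  rw [h2] at h
  have h3 : ((Polynomial.evalRingHom z) ∘ fun i => Polynomial.C ((c i : ℝ):ℂ) * Polynomial.X)
      = fun i => ((c i : ℝ):ℂ) * z := by
    funext i; simp
  rw [h3] at h
  have h4 : (Polynomial.evalRingHom z) (MvPolynomial.eval₂ Polynomial.C
      (fun i => Polynomial.C ((c i : ℝ):ℂ) * Polynomial.X) P)
      = (MvPolynomial.eval₂ Polynomial.C
        (fun i => Polynomial.C ((c i : ℝ):ℂ) * Polynomial.X) P).eval z := rfl
  rw [h4] at h
  rw [h, MvPolynomial.eval₂_id]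

lemma zero_mem_of_symm {m : ℕ} {V : Set (EuclideanSpace ℝ (Fin m))}
    (hVconv : Convex ℝ V) (hVsymm : V = -V) (hne : V.Nonempty) :
    (0 : EuclideanSpace ℝ (Fin m)) ∈ V := by
  obtain ⟨p, hp⟩ := hne
  have hnp : -p ∈ V := by
    rw [hVsymm, Set.mem_neg, neg_neg]; exact hp
  have := hVconv hp hnp (by norm_num : (0:ℝ) ≤ 1/2) (by norm_num : (0:ℝ) ≤ 1/2) (by norm_num)
  simpa [smul_neg] using this

lemma closedBall_subset_body {m : ℕ} {V : Set (EuclideanSpace ℝ (Fin m))}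
    (hVconv : Convex ℝ V) (hVcomp : IsCompact V) (hVsymm : V = -V)
    (hVint : (interior V).Nonempty) {wV : ℝ} (hwpos : 0 < wV)
    (hwV : wV = sInf {r : ℝ | ∃ u : EuclideanSpace ℝ (Fin m), ‖u‖ = 1 ∧
      r = 2 * sSup ((fun y : EuclideanSpace ℝ (Fin m) => (inner ℝ u y : ℝ)) '' V)}) :
    Metric.closedBall (0 : EuclideanSpace ℝ (Fin m)) (wV/2) ⊆ V := by
  have h0V : (0 : EuclideanSpace ℝ (Fin m)) ∈ V :=
    zero_mem_of_symm hVconv hVsymm ⟨_, interior_subset hVint.choose_spec⟩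
  have hVclosed : IsClosed V := hVcomp.isClosed
  have hbddS : BddBelow {r : ℝ | ∃ u : EuclideanSpace ℝ (Fin m), ‖u‖ = 1 ∧
      r = 2 * sSup ((fun y : EuclideanSpace ℝ (Fin m) => (inner ℝ u y : ℝ)) '' V)} := by
    refine ⟨0, ?_⟩
    rintro r ⟨u', hu', rfl⟩
    have hbdd : BddAbove ((fun y : EuclideanSpace ℝ (Fin m) => (inner ℝ u' y : ℝ)) '' V) :=
      (hVcomp.image (continuous_const.inner continuous_id)).bddAbove
    have h0 : (0:ℝ) ≤ sSup ((fun y : EuclideanSpace ℝ (Fin m) => (inner ℝ u' y : ℝ)) '' V) := by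
      refine le_csSup hbdd ⟨0, h0V, ?_⟩
      simp
    linarith
  have hball : Metric.ball (0 : EuclideanSpace ℝ (Fin m)) (wV/2) ⊆ V := by
    intro p hp
    rw [Metric.mem_ball, dist_zero_right] at hp
    by_contra hpV
    obtain ⟨f, u, hfu, hup⟩ := geometric_hahn_banach_closed_point hVconv hVclosed hpV
    have hu0 : (0:ℝ) < u := by simpa using hfu 0 h0V
    have hfp : (0:ℝ) < f p := lt_trans hu0 hup
    have hfne : f ≠ 0 := by
      intro h; rw [h] at hfp; simp at hfp
    have hnf : 0 < ‖f‖ := by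
      rcases (norm_nonneg f).lt_or_eq with h | h
      · exact h
      · exact absurd (ContinuousLinearMap.opNorm_zero_iff f |>.mp h.symm) hfne
    set w := (InnerProductSpace.toDual ℝ (EuclideanSpace ℝ (Fin m))).symm f with hwdef
    have hw : ∀ y, (inner ℝ w y : ℝ) = f y := fun y => InnerProductSpace.toDual_symm_apply
    have hwnorm : ‖w‖ = ‖f‖ := LinearIsometryEquiv.norm_map _ f
    set v : EuclideanSpace ℝ (Fin m) := ‖f‖⁻¹ • w with hvdef
    have hvnorm : ‖v‖ = 1 := by
      rw [hvdef, norm_smul, hwnorm, norm_inv, norm_norm, inv_mul_cancel₀ hnf.ne']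
    have hvy : ∀ y, (inner ℝ v y : ℝ) = ‖f‖⁻¹ * f y := by
      intro y; rw [hvdef, real_inner_smul_left, hw]
    set S := (fun y : EuclideanSpace ℝ (Fin m) => (inner ℝ v y : ℝ)) '' V with hSdef
    have hSne : S.Nonempty := ⟨_, 0, h0V, rfl⟩
    have hSle : sSup S ≤ ‖f‖⁻¹ * u := by
      refine csSup_le hSne ?_
      rintro r ⟨y, hy, rfl⟩
      show (inner ℝ v y : ℝ) ≤ ‖f‖⁻¹ * u
      rw [hvy]
      exact mul_le_mul_of_nonneg_left (hfu y hy).le (inv_nonneg.mpr hnf.le)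
    have hwle : wV ≤ 2 * sSup S := by
      rw [hwV]
      exact csInf_le hbddS ⟨v, hvnorm, rfl⟩
    have hlt : sSup S < ‖f‖⁻¹ * f p := lt_of_le_of_lt hSle
      (mul_lt_mul_of_pos_left hup (inv_pos.mpr hnf))
    have hip : ‖f‖⁻¹ * f p ≤ ‖p‖ := by
      rw [← hvy]
      calc (inner ℝ v p : ℝ) ≤ ‖v‖ * ‖p‖ := real_inner_le_norm v p
        _ = ‖p‖ := by rw [hvnorm, one_mul]
    linarith
  have : Metric.closedBall (0 : EuclideanSpace ℝ (Fin m)) (wV/2)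
      = closure (Metric.ball (0 : EuclideanSpace ℝ (Fin m)) (wV/2)) :=
    (closure_ball 0 (by positivity)).symm
  rw [this]
  calc closure (Metric.ball (0 : EuclideanSpace ℝ (Fin m)) (wV/2)) ⊆ closure V :=
        closure_mono hball
    _ = V := hVclosed.closure_eq


end ChebAux

/-- Chebyshev-type growth estimate outside a centrally symmetric convex body,
with `wV` the width of `V` (the minimum over unit directions `u` of the slab width
`2 * sup_{y ∈ V} ⟪u, y⟫`). -/
theorem chebyshev_bound_outside_convex_body {m : ℕ} (n : ℕ)
    (V : Set (EuclideanSpace ℝ (Fin m)))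
    (hVconv : Convex ℝ V) (hVcomp : IsCompact V) (hVsymm : V = -V)
    (hVint : (interior V).Nonempty)
    (P : MvPolynomial (Fin m) ℂ) (hdeg : P.totalDegree ≤ n)
    (wV : ℝ) (hwpos : 0 < wV)
    (hwV : wV = sInf {r : ℝ | ∃ u : EuclideanSpace ℝ (Fin m), ‖u‖ = 1 ∧
      r = 2 * sSup ((fun y : EuclideanSpace ℝ (Fin m) => (inner ℝ u y : ℝ)) '' V)}) :
    ∀ x : EuclideanSpace ℝ (Fin m), x ∉ V →
      ‖MvPolynomial.eval (fun i => (x i : ℂ)) P‖ ≤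
        (Chebyshev.T ℝ n).eval (2 * ‖x‖ / wV) *
          sSup ((fun y : EuclideanSpace ℝ (Fin m) =>
            ‖MvPolynomial.eval (fun i => (y i : ℂ)) P‖) '' V) := by
  intro x hx
  have hcb := closedBall_subset_body hVconv hVcomp hVsymm hVint hwpos hwV
  have h0V : (0 : EuclideanSpace ℝ (Fin m)) ∈ V :=
    zero_mem_of_symm hVconv hVsymm ⟨_, interior_subset hVint.choose_spec⟩
  have hx0 : x ≠ 0 := fun h => hx (h ▸ h0V)
  have hxnorm : 0 < ‖x‖ := norm_pos_iff.mpr hx0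
  have hxw : wV/2 < ‖x‖ := by
    by_contra h
    exact hx (hcb (by rw [Metric.mem_closedBall, dist_zero_right]; linarith))
  set t : ℝ := 2 * ‖x‖ / wV with htdef
  have ht : 1 ≤ t := by
    rw [htdef, le_div_iff₀ hwpos, one_mul]
    linarith
  set c : Fin m → ℝ := fun i => (wV/(2*‖x‖)) * x i with hcdef
  set q : Polynomial ℂ := MvPolynomial.eval₂ Polynomial.C
    (fun i => Polynomial.C ((c i : ℝ):ℂ) * Polynomial.X) P with hqdef
  have hgdeg : ∀ i, (Polynomial.C ((c i : ℝ):ℂ) * Polynomial.X).natDegree ≤ 1 :=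
    fun i => le_trans (Polynomial.natDegree_C_mul_le _ _) Polynomial.natDegree_X_le
  have hdegq : q.degree < ((n+1:ℕ) : WithBot ℕ) := by
    have h := (restrict_natDegree_le P _ hgdeg).trans hdeg
    calc q.degree ≤ (q.natDegree : WithBot ℕ) := Polynomial.degree_le_natDegree
      _ < ((n+1 : ℕ) : WithBot ℕ) := by
          rw [Nat.cast_lt]
          exact Nat.lt_succ_of_le h
  set g : EuclideanSpace ℝ (Fin m) → ℝ :=
    fun y => ‖MvPolynomial.eval (fun i => ((y i : ℝ) : ℂ)) P‖ with hgdef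
  have hgcont : Continuous g := by
    have h0 : Continuous fun y : EuclideanSpace ℝ (Fin m) => (fun i => ((y i : ℝ):ℂ)) :=
      continuous_pi fun i =>
        Complex.continuous_ofReal.comp (EuclideanSpace.proj (𝕜 := ℝ) i).continuous
    have h1 : Continuous fun y : EuclideanSpace ℝ (Fin m) =>
        MvPolynomial.eval (fun i => ((y i : ℝ):ℂ)) P :=
      (MvPolynomial.continuous_eval (p := P)).comp h0
    exact continuous_norm.comp h1
  set M : ℝ := sSup (g '' V) with hMdef
  have hbddM : BddAbove (g '' V) := (hVcomp.image hgcont).bddAbove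
  have hM : ∀ s : ℝ, |s| ≤ 1 → ‖q.eval (s:ℂ)‖ ≤ M := by
    intro s hs
    rw [hqdef, restrict_eval]
    set y : EuclideanSpace ℝ (Fin m) := s • ((wV/(2*‖x‖)) • x) with hydef
    have hyV : y ∈ V := by
      refine hcb ?_
      rw [Metric.mem_closedBall, dist_zero_right, hydef, norm_smul, norm_smul]
      have h2 : ‖(wV/(2*‖x‖) : ℝ)‖ = wV/(2*‖x‖) := by
        rw [Real.norm_eq_abs, abs_of_pos (by positivity)]
      rw [h2, Real.norm_eq_abs]
      have h3 : wV/(2*‖x‖) * ‖x‖ = wV/2 := by field_simp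
      rw [h3]
      nlinarith
    have hcoord : (fun i => ((c i : ℝ):ℂ) * (s:ℂ)) = fun i => ((y i : ℝ):ℂ) := by
      funext i
      have h4 : y i = c i * s := by
        rw [hydef, hcdef]
        simp [PiLp.smul_apply, smul_eq_mul]
        ring
      rw [h4]; push_cast; ring
    rw [hcoord]
    exact le_csSup hbddM ⟨y, hyV, rfl⟩
  have hmain := cheb_growth n q hdegq M hM ht
  rw [hqdef, restrict_eval] at hmain
  have hcoord2 : (fun i => ((c i : ℝ):ℂ) * (t:ℂ)) = fun i => ((x i : ℝ):ℂ) := by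
    funext i
    have h5 : c i * t = x i := by
      rw [hcdef, htdef]
      field_simp
    calc ((c i : ℝ):ℂ) * (t:ℂ) = ((c i * t : ℝ) : ℂ) := by push_cast; ring
      _ = ((x i : ℝ):ℂ) := by rw [h5]
  rw [hcoord2] at hmain
  exact hmain
end

section
/- Let P be a real polynomial in m variables of degree at most n in each variable, let λ > 0, let k ∈ ℤ₊^m, and let x ∈ ℝ^m with |x_j| > λ for all j. Then |D^k P(x)| ≤ λ^{−(k₁+⋯+k_m)} · ∏_{j=1}^m |T_n^{(k_j)}(x_j/λ)| · max_{y∈[−λ,λ]^m} |P(y)|. -/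
open Polynomial

/-- Iterated partial derivative `D^k = ∂^{k 0}_{x 0} ⋯ ∂^{k (m-1)}_{x (m-1)}` of a
multivariate polynomial. -/
noncomputable def mderiv {m : ℕ} (k : Fin m → ℕ) (P : MvPolynomial (Fin m) ℝ) :
    MvPolynomial (Fin m) ℝ :=
  (List.ofFn (fun j : Fin m => (fun Q => MvPolynomial.pderiv j Q)^[k j])).foldr
    (· ∘ ·) id P

lemma iter_deriv_add (k : ℕ) (p q : ℝ[X]) :
    derivative^[k] (p + q) = derivative^[k] p + derivative^[k] q := by
  induction k generalizing p q with
  | zero => simp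
  | succ k ih => simp [Function.iterate_succ_apply, derivative_add, ih]

lemma iter_deriv_msum (k : ℕ) (ms : Multiset ℝ[X]) :
    derivative^[k] ms.sum = (ms.map (fun q => derivative^[k] q)).sum := by
  induction ms using Multiset.induction_on with
  | empty => simp [Polynomial.iterate_derivative_zero]
  | cons a s ih => simp [iter_deriv_add, ih]

lemma eval_msum (x : ℝ) (ms : Multiset ℝ[X]) :
    eval x ms.sum = (ms.map (fun q => eval x q)).sum := by
  induction ms using Multiset.induction_on with
  | empty => simp
  | cons a s ih => simp [ih]

lemma iter_deriv_prod_nonneg (k : ℕ) :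
    ∀ (s : Multiset ℝ), (∀ r ∈ s, r ≤ 1) → ∀ t : ℝ, 1 < t →
      0 ≤ (derivative^[k] ((s.map (fun r => X - C r)).prod)).eval t := by
  induction k with
  | zero =>
    intro s hs t ht
    simp only [Function.iterate_zero, id_eq]
    rw [Polynomial.eval_multiset_prod]
    apply Multiset.prod_nonneg
    intro a ha
    simp only [Multiset.mem_map] at ha
    obtain ⟨q, hq, rfl⟩ := ha
    obtain ⟨r, hr, rfl⟩ := hq
    simp only [eval_sub, eval_X, eval_C, sub_nonneg]
    exact (hs r hr).trans ht.le
  | succ k ih =>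
    intro s hs t ht
    rw [Function.iterate_succ_apply, Polynomial.derivative_prod, iter_deriv_msum,
      Multiset.map_map, eval_msum, Multiset.map_map]
    apply Multiset.sum_nonneg
    intro a ha
    simp only [Multiset.mem_map, Function.comp_apply] at ha
    obtain ⟨r, hr, rfl⟩ := ha
    simp only [derivative_sub, derivative_X, derivative_C, sub_zero, mul_one]
    exact ih (s.erase r) (fun a ha => hs a (Multiset.mem_of_mem_erase ha)) t ht

lemma natDegree_T_le : ∀ n : ℕ, (Chebyshev.T ℝ (n:ℤ)).natDegree ≤ n := by
  intro n
  induction n using Nat.strong_induction_on with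
  | _ n ih =>
    match n with
    | 0 => simp [Chebyshev.T_zero]
    | 1 => simp [Chebyshev.T_one]
    | (n+2) =>
      have h : (((n:ℕ)+2 : ℕ) : ℤ) = ((n:ℤ) + 2) := by push_cast; ring
      rw [h, Chebyshev.T_add_two]
      refine (natDegree_sub_le _ _).trans ?_
      have h1 : (2 * X * Chebyshev.T ℝ ((n:ℤ)+1)).natDegree ≤ n + 2 := by
        refine (natDegree_mul_le).trans ?_
        have : (2 * X : ℝ[X]).natDegree ≤ 1 := by
          refine (natDegree_mul_le).trans ?_
          simp
        have h2 : (Chebyshev.T ℝ ((n:ℤ)+1)).natDegree ≤ n + 1 := by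
          have := ih (n+1) (by omega)
          rwa [Nat.cast_add, Nat.cast_one] at this
        omega
      have h2 : (Chebyshev.T ℝ (n:ℤ)).natDegree ≤ n := ih n (by omega)
      simp only [max_le_iff]
      exact ⟨h1, by omega⟩

open Real in
lemma cheb_core (n k : ℕ) (p : ℝ[X]) (hp : p.natDegree ≤ n) (M : ℝ)
    (hM : ∀ s : ℝ, |s| ≤ 1 → |p.eval s| ≤ M) (t : ℝ) (ht : 1 < t) :
    0 ≤ (derivative^[k] (Chebyshev.T ℝ (n:ℤ))).eval t ∧
    |(derivative^[k] p).eval t| ≤ (derivative^[k] (Chebyshev.T ℝ (n:ℤ))).eval t * M := by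
  have hM0 : 0 ≤ M := le_trans (abs_nonneg _) (hM 0 (by norm_num))
  rcases Nat.eq_zero_or_pos n with rfl | hn
  · -- n = 0 : p is a constant
    have hpC : p = C (p.coeff 0) := eq_C_of_natDegree_le_zero hp
    have hT0 : Chebyshev.T ℝ ((0:ℕ):ℤ) = C 1 := by
      simp [Chebyshev.T_zero]
    cases k with
    | zero =>
      simp only [Function.iterate_zero, id_eq, hT0, eval_C, one_mul]
      refine ⟨zero_le_one, ?_⟩
      have := hM 0 (by norm_num)
      rw [hpC] at this ⊢
      simpa using this
    | succ k =>
      rw [hpC, hT0]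
      simp [Function.iterate_succ_apply, derivative_C, iterate_derivative_zero]
  · -- n ≥ 1
    set s : Finset ℕ := Finset.range (n + 1) with hs
    set v : ℕ → ℝ := fun i => Real.cos (i * π / n) with hv
    have hnR : (0:ℝ) < n := by exact_mod_cast hn
    have hmem : ∀ i ∈ s, (i:ℝ) * π / n ∈ Set.Icc 0 π := by
      intro i hi
      simp only [hs, Finset.mem_range] at hi
      constructor
      · positivity
      · rw [div_le_iff₀ hnR]
        have : (i:ℝ) ≤ n := by exact_mod_cast Nat.lt_succ_iff.mp hi
        nlinarith [Real.pi_pos]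
    have hanti : ∀ i ∈ s, ∀ j ∈ s, i < j → v j < v i := by
      intro i hi j hj hij
      apply Real.strictAntiOn_cos (hmem i hi) (hmem j hj)
      have : (i:ℝ) < j := by exact_mod_cast hij
      have := Real.pi_pos
      apply div_lt_div_of_pos_right ?_ hnR
      nlinarith
    have hinj : Set.InjOn v s := by
      intro i hi j hj hij
      by_contra hne
      rcases Nat.lt_or_ge i j with h | h
      · have h2 := hanti i hi j hj h; rw [hij] at h2; exact lt_irrefl _ h2
      · have h2 := hanti j hj i hi (by omega); rw [hij] at h2; exact lt_irrefl _ h2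
    set c : ℕ → ℝ := fun i => ∏ j ∈ s.erase i, (v i - v j)⁻¹ with hc
    set q : ℕ → ℝ[X] := fun i => ∏ j ∈ s.erase i, (X - C (v j)) with hq
    set g : ℕ → ℝ := fun i => (derivative^[k] (q i)).eval t with hg
    have hg_nonneg : ∀ i, 0 ≤ g i := by
      intro i
      have hq' : q i = ((((s.erase i).val.map v)).map (fun r => X - C r)).prod := by
        simp only [hq, Finset.prod_eq_multiset_prod, Multiset.map_map, Function.comp]
      show 0 ≤ (derivative^[k] (q i)).eval t
      rw [hq']
      apply iter_deriv_prod_nonneg k _ _ t ht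
      intro r hr
      simp only [Multiset.mem_map] at hr
      obtain ⟨j, _, rfl⟩ := hr
      exact Real.cos_le_one _
    have hbasis : ∀ i, Lagrange.basis s v i = C (c i) * q i := by
      intro i
      show _ = C (∏ j ∈ s.erase i, (v i - v j)⁻¹) * ∏ j ∈ s.erase i, (X - C (v j))
      rw [Lagrange.basis]
      simp only [Lagrange.basisDivisor]
      rw [Finset.prod_mul_distrib, map_prod]
    have hsign : ∀ i ∈ s, 0 ≤ (-1:ℝ)^i * c i := by
      intro i his
      have hsplit : s.erase i = Finset.range (min i (n+1)) ∪ Finset.Ico (i+1) (n+1) := by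
        ext j
        simp only [Finset.mem_erase, Finset.mem_union, Finset.mem_range, Finset.mem_Ico, hs,
          Finset.mem_range, lt_min_iff]
        omega
      · have hmin : min i (n+1) = i := by
          simp only [hs, Finset.mem_range] at his; omega
        show 0 ≤ (-1:ℝ)^i * ∏ j ∈ s.erase i, (v i - v j)⁻¹
        rw [hsplit, hmin, Finset.prod_union (by
          simp only [Finset.disjoint_left, Finset.mem_range, Finset.mem_Ico]; omega)]
        have h1 : ∏ j ∈ Finset.range i, (v i - v j)⁻¹
            = (-1:ℝ)^i * ∏ j ∈ Finset.range i, (v j - v i)⁻¹ := by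
          have h0 : ∀ j ∈ Finset.range i, (v i - v j)⁻¹ = (-1) * (v j - v i)⁻¹ := by
            intro j hj
            rw [show v i - v j = -(v j - v i) by ring, inv_neg]
            ring
          rw [Finset.prod_congr rfl h0, Finset.prod_mul_distrib, Finset.prod_const,
            Finset.card_range]
        rw [h1, ← mul_assoc, ← mul_assoc, ← mul_pow]
        norm_num
        apply mul_nonneg
        · rw [inv_nonneg]
          apply Finset.prod_nonneg
          intro j hj
          simp only [Finset.mem_range] at hj
          have hlt : v i < v j := by
            apply hanti j ?_ i his hj
            simp only [hs, Finset.mem_range] at his ⊢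
            omega
          linarith
        · rw [inv_nonneg]
          apply Finset.prod_nonneg
          intro j hj
          simp only [Finset.mem_Ico] at hj
          have hlt : v j < v i := by
            apply hanti i his j ?_ hj.1
            simp only [hs, Finset.mem_range]
            omega
          linarith
    have habs_c : ∀ i ∈ s, |c i| = (-1:ℝ)^i * c i := by
      intro i his
      rw [← abs_of_nonneg (hsign i his), abs_mul, abs_pow, abs_neg, abs_one, one_pow, one_mul]
    have hTnode : ∀ i ∈ s, (Chebyshev.T ℝ (n:ℤ)).eval (v i) = (-1:ℝ)^i := by
      intro i his
      have hvi : v i = Real.cos ((i:ℝ) * π / n) := rfl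
      rw [hvi, Chebyshev.T_real_cos]
      have harg : ((n:ℤ):ℝ) * ((i:ℝ) * π / n) = (i:ℝ) * π := by
        push_cast
        field_simp
      rw [harg]
      have := Real.cos_nat_mul_pi_sub 0 i
      simpa using this
    have hcard : s.card = n + 1 := Finset.card_range _
    have hdeglt : ∀ f : ℝ[X], f.natDegree ≤ n → f.degree < (s.card : WithBot ℕ) := by
      intro f hf
      rw [hcard]
      calc f.degree ≤ (f.natDegree : WithBot ℕ) := degree_le_natDegree
        _ < ((n + 1 : ℕ) : WithBot ℕ) := by exact_mod_cast Nat.lt_succ_of_le hf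
    have hpint := Lagrange.eq_interpolate hinj (hdeglt p hp)
    have hTint := Lagrange.eq_interpolate hinj (hdeglt _ (natDegree_T_le n))
    rw [Lagrange.interpolate_apply] at hpint hTint
    have key : ∀ f : ℝ[X], f = ∑ i ∈ s, C (f.eval (v i)) * Lagrange.basis s v i →
        (derivative^[k] f).eval t = ∑ i ∈ s, f.eval (v i) * (c i * g i) := by
      intro f hf
      conv_lhs => rw [hf]
      rw [Polynomial.iterate_derivative_sum, Polynomial.eval_finset_sum]
      apply Finset.sum_congr rfl
      intro i his
      rw [hbasis i, ← mul_assoc, ← C_mul, Polynomial.iterate_derivative_C_mul, eval_mul,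
        eval_C, mul_assoc]
    have hpval := key p hpint
    have hTval : (derivative^[k] (Chebyshev.T ℝ (n:ℤ))).eval t = ∑ i ∈ s, |c i| * g i := by
      rw [key _ hTint]
      apply Finset.sum_congr rfl
      intro i his
      rw [hTnode i his, ← mul_assoc, ← habs_c i his]
    constructor
    · rw [hTval]
      exact Finset.sum_nonneg fun i hi => mul_nonneg (abs_nonneg _) (hg_nonneg i)
    · rw [hpval, hTval, Finset.sum_mul]
      refine (Finset.abs_sum_le_sum_abs _ _).trans (Finset.sum_le_sum ?_)
      intro i his
      calc |p.eval (v i) * (c i * g i)| = |p.eval (v i)| * (|c i| * g i) := by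
            rw [abs_mul, abs_mul, abs_of_nonneg (hg_nonneg i)]
        _ ≤ M * (|c i| * g i) := by
            apply mul_le_mul_of_nonneg_right (hM _ (Real.abs_cos_le_one _))
            exact mul_nonneg (abs_nonneg _) (hg_nonneg i)
        _ = |c i| * g i * M := by ring

lemma iter_deriv_comp_scale (k : ℕ) (p : ℝ[X]) (a : ℝ) :
    derivative^[k] (p.comp (C a * X)) = C (a^k) * (derivative^[k] p).comp (C a * X) := by
  induction k generalizing p with
  | zero => simp
  | succ k ih =>
    rw [Function.iterate_succ_apply', ih, derivative_C_mul, derivative_comp,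
      Function.iterate_succ_apply']
    simp only [derivative_mul, derivative_C, derivative_X, zero_mul, mul_one, zero_add]
    rw [pow_succ, C_mul]
    ring

open Real in
lemma T_parity (n : ℕ) :
    (Chebyshev.T ℝ (n:ℤ)).comp (C (-1:ℝ) * X) = C ((-1:ℝ)^n) * Chebyshev.T ℝ (n:ℤ) := by
  apply Polynomial.eq_of_infinite_eval_eq
  have hsub : Set.Icc (-1:ℝ) 1 ⊆ {x | eval x ((Chebyshev.T ℝ (n:ℤ)).comp (C (-1:ℝ) * X)) =
      eval x (C ((-1:ℝ)^n) * Chebyshev.T ℝ (n:ℤ))} := by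
    intro x hx
    obtain ⟨hx1, hx2⟩ := hx
    simp only [Set.mem_setOf_eq]
    have hcos : Real.cos (Real.arccos x) = x := Real.cos_arccos hx1 hx2
    rw [eval_comp, eval_mul, eval_C, eval_X, eval_mul, eval_C, ← hcos]
    have h1 : (-1 : ℝ) * Real.cos (Real.arccos x) = Real.cos (π - Real.arccos x) := by
      rw [Real.cos_pi_sub]; ring
    rw [h1, Chebyshev.T_real_cos, Chebyshev.T_real_cos]
    have h2 : ((n:ℤ):ℝ) * (π - Real.arccos x) = (n:ℝ) * π - (n:ℝ) * Real.arccos x := by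
      push_cast; ring
    rw [h2]
    have h3 := Real.cos_nat_mul_pi_sub ((n:ℝ) * Real.arccos x) n
    push_cast at h3 ⊢
    exact h3
  exact (Set.Icc_infinite (by norm_num : (-1:ℝ) < 1)).mono hsub

lemma cheb_scaled (n k : ℕ) (p : ℝ[X]) (hp : p.natDegree ≤ n) (lam : ℝ) (hlam : 0 < lam)
    (M : ℝ) (hM : ∀ s : ℝ, |s| ≤ lam → |p.eval s| ≤ M) (t : ℝ) (ht : lam < |t|) :
    |(derivative^[k] p).eval t| ≤
      (lam ^ k)⁻¹ * |(derivative^[k] (Chebyshev.T ℝ (n:ℤ))).eval (t / lam)| * M := by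
  have hl0 : lam ≠ 0 := ne_of_gt hlam
  have hpk : (0:ℝ) < lam ^ k := pow_pos hlam k
  set q : ℝ[X] := p.comp (C lam * X) with hqdef
  have hqdeg : q.natDegree ≤ n := by
    rw [hqdef, natDegree_comp, natDegree_C_mul_X lam hl0, mul_one]; exact hp
  have hqM : ∀ u : ℝ, |u| ≤ 1 → |q.eval u| ≤ M := by
    intro u hu
    rw [hqdef, eval_comp, eval_mul, eval_C, eval_X]
    apply hM
    rw [abs_mul, abs_of_pos hlam]
    calc lam * |u| ≤ lam * 1 := by nlinarith [abs_nonneg u]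
      _ = lam := mul_one lam
  have hqk : ∀ u : ℝ, (derivative^[k] q).eval u
      = lam ^ k * (derivative^[k] p).eval (lam * u) := by
    intro u
    rw [hqdef, iter_deriv_comp_scale, eval_mul, eval_C, eval_comp, eval_mul, eval_C, eval_X]
  have heq : lam * (t / lam) = t := by field_simp
  rcases lt_abs.mp ht with h | h
  · have ht1 : 1 < t / lam := (one_lt_div hlam).mpr h
    obtain ⟨hT0, hble⟩ := cheb_core n k q hqdeg M hqM (t / lam) ht1
    rw [hqk, heq, abs_mul, abs_of_pos hpk] at hble
    rw [abs_of_nonneg hT0]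
    calc |(derivative^[k] p).eval t|
        = (lam^k * |(derivative^[k] p).eval t|) / lam^k := by field_simp
      _ ≤ ((derivative^[k] (Chebyshev.T ℝ (n:ℤ))).eval (t/lam) * M) / lam^k :=
          (div_le_div_iff_of_pos_right hpk).mpr hble
      _ = (lam ^ k)⁻¹ * (derivative^[k] (Chebyshev.T ℝ (n:ℤ))).eval (t/lam) * M := by ring
  · have ht1 : 1 < (-t) / lam := (one_lt_div hlam).mpr h
    set q' : ℝ[X] := q.comp (C (-1:ℝ) * X) with hq'def
    have hq'deg : q'.natDegree ≤ n := by
      rw [hq'def, natDegree_comp, natDegree_C_mul_X _ (by norm_num : (-1:ℝ) ≠ 0), mul_one]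
      exact hqdeg
    have hq'M : ∀ u : ℝ, |u| ≤ 1 → |q'.eval u| ≤ M := by
      intro u hu
      rw [hq'def, eval_comp, eval_mul, eval_C, eval_X]
      apply hqM
      rw [abs_mul]
      simpa using hu
    obtain ⟨hT0, hble⟩ := cheb_core n k q' hq'deg M hq'M (-t/lam) ht1
    have hq'k : (derivative^[k] q').eval (-t/lam)
        = (-1:ℝ)^k * (derivative^[k] q).eval (t/lam) := by
      rw [hq'def, iter_deriv_comp_scale, eval_mul, eval_C, eval_comp, eval_mul, eval_C, eval_X]
      rw [show (-1:ℝ) * (-t/lam) = t/lam by ring]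
    rw [hq'k, abs_mul, abs_pow, abs_neg, abs_one, one_pow, one_mul, hqk, heq, abs_mul,
      abs_of_pos hpk] at hble
    have hpareq : ((-1:ℝ))^k * (derivative^[k] (Chebyshev.T ℝ (n:ℤ))).eval (-t/lam)
        = (-1:ℝ)^n * (derivative^[k] (Chebyshev.T ℝ (n:ℤ))).eval (t/lam) := by
      have h2 : derivative^[k] ((Chebyshev.T ℝ (n:ℤ)).comp (C (-1:ℝ) * X))
          = derivative^[k] (C ((-1:ℝ)^n) * Chebyshev.T ℝ (n:ℤ)) := by rw [T_parity n]
      rw [iter_deriv_comp_scale, Polynomial.iterate_derivative_C_mul] at h2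
      have h3 := congrArg (Polynomial.eval (t/lam)) h2
      simp only [eval_mul, eval_C, eval_comp, eval_X] at h3
      rw [show (-1:ℝ) * (t/lam) = -t/lam by ring] at h3
      exact h3
    have habs : (derivative^[k] (Chebyshev.T ℝ (n:ℤ))).eval (-t/lam)
        = |(derivative^[k] (Chebyshev.T ℝ (n:ℤ))).eval (t/lam)| := by
      have h4 := congrArg abs hpareq
      simp only [abs_mul, abs_pow, abs_neg, abs_one, one_pow, one_mul] at h4
      rw [← h4, abs_of_nonneg hT0]
    rw [habs] at hble
    calc |(derivative^[k] p).eval t|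
        = (lam^k * |(derivative^[k] p).eval t|) / lam^k := by field_simp
      _ ≤ (|(derivative^[k] (Chebyshev.T ℝ (n:ℤ))).eval (t/lam)| * M) / lam^k :=
          (div_le_div_iff_of_pos_right hpk).mpr hble
      _ = (lam ^ k)⁻¹ * |(derivative^[k] (Chebyshev.T ℝ (n:ℤ))).eval (t/lam)| * M := by ring

section Multivariate

variable {m : ℕ}

/-- Univariate section of a multivariate polynomial in coordinate `j`. -/
noncomputable def sec (j : Fin m) (x : Fin m → ℝ) (P : MvPolynomial (Fin m) ℝ) : ℝ[X] :=
  MvPolynomial.aeval (fun i => if i = j then (X : ℝ[X]) else C (x i)) P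

lemma eval_sec (j : Fin m) (x : Fin m → ℝ) (P : MvPolynomial (Fin m) ℝ) (t : ℝ) :
    (sec j x P).eval t = MvPolynomial.eval (Function.update x j t) P := by
  rw [sec, ← Polynomial.coe_aeval_eq_eval, MvPolynomial.comp_aeval_apply]
  have h1 : (fun i => (Polynomial.aeval t) (if i = j then (X:ℝ[X]) else C (x i)))
      = Function.update x j t := by
    funext i
    by_cases hij : i = j
    · subst hij; simp [Function.update_self]
    · simp [hij, Function.update_of_ne hij]
  rw [h1, MvPolynomial.aeval_def, Algebra.algebraMap_self]
  rfl

lemma sec_pderiv (j : Fin m) (x : Fin m → ℝ) (P : MvPolynomial (Fin m) ℝ) :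
    sec j x (MvPolynomial.pderiv j P) = derivative (sec j x P) := by
  simp only [sec]
  induction P using MvPolynomial.induction_on with
  | C a => simp [MvPolynomial.algebraMap_eq]
  | add p q hp hq => simp only [map_add, derivative_add, hp, hq]
  | mul_X p i hp =>
    by_cases hij : i = j
    · subst hij
      simp only [MvPolynomial.pderiv_mul, MvPolynomial.pderiv_X_self, mul_one, map_add,
        map_mul, MvPolynomial.aeval_X, eq_self_iff_true, if_true, derivative_mul,
        derivative_X, mul_one, hp]
    · simp only [MvPolynomial.pderiv_mul, MvPolynomial.pderiv_X_of_ne hij, mul_zero, add_zero,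
        map_mul, MvPolynomial.aeval_X, if_neg hij, derivative_mul, derivative_C, mul_zero,
        add_zero, hp]

lemma sec_pderiv_iterate (j : Fin m) (x : Fin m → ℝ) (P : MvPolynomial (Fin m) ℝ) (c : ℕ) :
    sec j x ((fun Q => MvPolynomial.pderiv j Q)^[c] P) = derivative^[c] (sec j x P) := by
  induction c generalizing P with
  | zero => simp
  | succ c ih =>
    rw [Function.iterate_succ_apply, Function.iterate_succ_apply, ih, sec_pderiv]

lemma eval_pderiv_iterate (j : Fin m) (x : Fin m → ℝ) (P : MvPolynomial (Fin m) ℝ) (c : ℕ) :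
    MvPolynomial.eval x ((fun Q => MvPolynomial.pderiv j Q)^[c] P)
      = (derivative^[c] (sec j x P)).eval (x j) := by
  rw [← sec_pderiv_iterate, eval_sec, Function.update_eq_self]

end Multivariate

section Multivariate2

variable {m : ℕ}

lemma natDegree_sec_le (j : Fin m) (x : Fin m → ℝ) (P : MvPolynomial (Fin m) ℝ) :
    (sec j x P).natDegree ≤ P.degreeOf j := by
  conv_lhs => rw [MvPolynomial.as_sum P]
  rw [sec, map_sum]
  apply natDegree_sum_le_of_forall_le
  intro d hd
  rw [MvPolynomial.aeval_monomial]
  refine natDegree_mul_le.trans ?_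
  have h1 : (algebraMap ℝ ℝ[X]) (MvPolynomial.coeff d P) = C (MvPolynomial.coeff d P) := rfl
  rw [h1, natDegree_C, zero_add]
  refine (natDegree_prod_le _ _).trans ?_
  have h2 : ∀ i ∈ d.support,
      ((if i = j then (X:ℝ[X]) else C (x i)) ^ d i).natDegree ≤ if i = j then d i else 0 := by
    intro i hi
    by_cases hij : i = j
    · simp only [if_pos hij]
      refine natDegree_pow_le.trans ?_
      simp
    · simp only [if_neg hij]
      refine natDegree_pow_le.trans ?_
      simp
  refine (Finset.sum_le_sum h2).trans ?_
  rw [Finset.sum_ite_eq' d.support j (fun i => d i)]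
  by_cases hj : j ∈ d.support
  · rw [if_pos hj]
    exact MvPolynomial.monomial_le_degreeOf j hd
  · rw [if_neg hj]
    exact Nat.zero_le _

lemma degreeOf_pderiv_le (i j : Fin m) (P : MvPolynomial (Fin m) ℝ) :
    (MvPolynomial.pderiv j P).degreeOf i ≤ P.degreeOf i := by
  classical
  rw [MvPolynomial.degreeOf_eq_sup]
  apply Finset.sup_le
  intro d hd
  -- express pderiv of sum of monomials
  have hrw : MvPolynomial.pderiv j P
      = ∑ e ∈ P.support, MvPolynomial.monomial (e - Finsupp.single j 1)
          (MvPolynomial.coeff e P * e j) := by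
    conv_lhs => rw [MvPolynomial.as_sum P]
    rw [map_sum]
    exact Finset.sum_congr rfl fun e he => MvPolynomial.pderiv_monomial
  rw [hrw] at hd
  have := MvPolynomial.support_sum hd
  simp only [Finset.mem_biUnion] at this
  obtain ⟨e, he, hd2⟩ := this
  have hsub := MvPolynomial.support_monomial_subset hd2
  simp only [Finset.mem_singleton] at hsub
  subst hsub
  have h3 : ((e - Finsupp.single j 1) : Fin m →₀ ℕ) i ≤ e i := by
    rw [Finsupp.tsub_apply]
    exact Nat.sub_le _ _
  exact h3.trans (MvPolynomial.monomial_le_degreeOf i he)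

lemma degreeOf_pderiv_iterate_le (i j : Fin m) (P : MvPolynomial (Fin m) ℝ) (c : ℕ) :
    ((fun Q => MvPolynomial.pderiv j Q)^[c] P).degreeOf i ≤ P.degreeOf i := by
  induction c generalizing P with
  | zero => simp
  | succ c ih =>
    rw [Function.iterate_succ_apply]
    exact (ih _).trans (degreeOf_pderiv_le i j P)

end Multivariate2

section Multivariate3

variable {m : ℕ}

noncomputable def applyL (L : List (Fin m × ℕ)) (P : MvPolynomial (Fin m) ℝ) :
    MvPolynomial (Fin m) ℝ :=
  L.foldr (fun jc Q => (fun R => MvPolynomial.pderiv jc.1 R)^[jc.2] Q) P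

lemma applyL_degreeOf_le (i : Fin m) :
    ∀ (L : List (Fin m × ℕ)) (P : MvPolynomial (Fin m) ℝ),
      (applyL L P).degreeOf i ≤ P.degreeOf i := by
  intro L
  induction L with
  | nil => intro P; exact le_rfl
  | cons jc L ih =>
    intro P
    calc (applyL (jc :: L) P).degreeOf i
        = ((fun R => MvPolynomial.pderiv jc.1 R)^[jc.2] (applyL L P)).degreeOf i := rfl
      _ ≤ (applyL L P).degreeOf i := degreeOf_pderiv_iterate_le i jc.1 _ jc.2
      _ ≤ P.degreeOf i := ih P

lemma list_prod_nonneg : ∀ (L : List ℝ), (∀ a ∈ L, 0 ≤ a) → 0 ≤ L.prod := by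
  intro L
  induction L with
  | nil => intro _; simp
  | cons a L ih =>
    intro h
    rw [List.prod_cons]
    exact mul_nonneg (h a (by simp)) (ih fun b hb => h b (by simp [hb]))

lemma eval_abs_le_bound (P : MvPolynomial (Fin m) ℝ) (b : Fin m → ℝ)
    (y : Fin m → ℝ) (hy : ∀ i, |y i| ≤ b i) :
    |MvPolynomial.eval y P| ≤
      ∑ d ∈ P.support, |MvPolynomial.coeff d P| * ∏ i ∈ d.support, b i ^ d i := by
  rw [MvPolynomial.eval_eq]
  refine (Finset.abs_sum_le_sum_abs _ _).trans (Finset.sum_le_sum ?_)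
  intro d hd
  rw [abs_mul]
  apply mul_le_mul_of_nonneg_left ?_ (abs_nonneg _)
  rw [Finset.abs_prod]
  apply Finset.prod_le_prod (fun i _ => abs_nonneg _)
  intro i hi
  rw [abs_pow]
  exact pow_le_pow_left₀ (abs_nonneg _) (hy i) _

/-- Constraint set for the chained supremum argument. -/
def SS (lam : ℝ) (P : MvPolynomial (Fin m) ℝ) (fs : List (Fin m)) (x : Fin m → ℝ) : Set ℝ :=
  {r : ℝ | ∃ y : Fin m → ℝ, (∀ j : Fin m, (j ∈ fs → |y j| ≤ lam) ∧ (j ∉ fs → y j = x j)) ∧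
    r = |MvPolynomial.eval y P|}

lemma SS_nonempty (lam : ℝ) (hlam : 0 < lam) (P : MvPolynomial (Fin m) ℝ)
    (fs : List (Fin m)) (x : Fin m → ℝ) : (SS lam P fs x).Nonempty := by
  classical
  refine ⟨_, ⟨fun j => if j ∈ fs then 0 else x j, fun j => ⟨fun h => ?_, fun h => ?_⟩, rfl⟩⟩
  · simp [h, hlam.le]
  · simp [h]

lemma SS_bddAbove (lam : ℝ) (P : MvPolynomial (Fin m) ℝ)
    (fs : List (Fin m)) (x : Fin m → ℝ) (hfs : ∀ j ∈ fs, lam ≤ |x j| ∨ True) :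
    BddAbove (SS lam P fs x) := by
  refine ⟨∑ d ∈ P.support, |MvPolynomial.coeff d P| *
    ∏ i ∈ d.support, (max lam |x i|) ^ d i, ?_⟩
  rintro r ⟨y, hy, rfl⟩
  apply eval_abs_le_bound
  intro i
  by_cases hi : i ∈ fs
  · exact ((hy i).1 hi).trans (le_max_left _ _)
  · rw [(hy i).2 hi]; exact le_max_right _ _

lemma SS_sSup_nonneg (lam : ℝ) (hlam : 0 < lam) (P : MvPolynomial (Fin m) ℝ)
    (fs : List (Fin m)) (x : Fin m → ℝ) : 0 ≤ sSup (SS lam P fs x) := by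
  obtain ⟨r, hr⟩ := SS_nonempty lam hlam P fs x
  have h0 : 0 ≤ r := by obtain ⟨y, _, rfl⟩ := hr; exact abs_nonneg _
  exact h0.trans (le_csSup (SS_bddAbove lam P fs x (fun _ _ => Or.inr trivial)) hr)

lemma SS_subset_cons (lam : ℝ) (P : MvPolynomial (Fin m) ℝ) (fs : List (Fin m))
    (x : Fin m → ℝ) (j : Fin m) (s : ℝ) (hs : |s| ≤ lam) :
    SS lam P fs (Function.update x j s) ⊆ SS lam P (j :: fs) x := by
  rintro r ⟨y, hy, rfl⟩
  refine ⟨y, fun j' => ⟨fun h => ?_, fun h => ?_⟩, rfl⟩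
  · rcases List.mem_cons.mp h with h1 | h2
    · subst h1
      by_cases hj : j' ∈ fs
      · exact (hy j').1 hj
      · rw [(hy j').2 hj, Function.update_self]
        exact hs
    · exact (hy j').1 h2
  · have h1 : j' ∉ fs := fun hh => h (List.mem_cons_of_mem _ hh)
    have h2 : j' ≠ j := fun hh => h (hh ▸ List.mem_cons_self)
    rw [(hy j').2 h1, Function.update_of_ne h2]

end Multivariate3

section Master

variable {m : ℕ}

lemma master (n : ℕ) (lam : ℝ) (hlam : 0 < lam) :
    ∀ (L : List (Fin m × ℕ)) (P : MvPolynomial (Fin m) ℝ), (∀ j, P.degreeOf j ≤ n) →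
      (L.map Prod.fst).Nodup → ∀ (x : Fin m → ℝ), (∀ j ∈ L.map Prod.fst, lam < |x j|) →
      |MvPolynomial.eval x (applyL L P)| ≤
        (L.map (fun jc => (lam ^ jc.2)⁻¹)).prod *
        (L.map (fun jc =>
          |(derivative^[jc.2] (Chebyshev.T ℝ (n:ℤ))).eval (x jc.1 / lam)|)).prod *
        sSup (SS lam P (L.map Prod.fst) x) := by
  intro L
  induction L with
  | nil =>
    intro P hdeg _ x _
    simp only [applyL, List.foldr_nil, List.map_nil, List.prod_nil, one_mul]
    apply le_csSup (SS_bddAbove lam P [] x (fun _ _ => Or.inr trivial))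
    exact ⟨x, fun j => ⟨fun h => absurd h List.not_mem_nil, fun _ => rfl⟩, rfl⟩
  | cons jc L ih =>
    intro P hdeg hnd x hx
    obtain ⟨j, c⟩ := jc
    simp only [List.map_cons, List.nodup_cons] at hnd
    obtain ⟨hjL, hndL⟩ := hnd
    have hxj : lam < |x j| := hx j (by simp)
    set Q := applyL L P with hQ
    have hQdeg : Q.degreeOf j ≤ n := (applyL_degreeOf_le j L P).trans (hdeg j)
    have hbdd := SS_bddAbove lam P (j :: L.map Prod.fst) x (fun _ _ => Or.inr trivial)
    set Msup := sSup (SS lam P (j :: List.map Prod.fst L) x) with hMsup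
    have hMsup0 : 0 ≤ Msup := SS_sSup_nonneg lam hlam P _ x
    set A := (L.map (fun jc => (lam ^ jc.2)⁻¹)).prod with hA
    set B := (L.map (fun jc =>
      |(derivative^[jc.2] (Chebyshev.T ℝ (n:ℤ))).eval (x jc.1 / lam)|)).prod with hB
    have hA0 : 0 ≤ A := by
      apply list_prod_nonneg
      intro a ha
      simp only [List.mem_map] at ha
      obtain ⟨b, _, rfl⟩ := ha
      positivity
    have hB0 : 0 ≤ B := by
      apply list_prod_nonneg
      intro a ha
      simp only [List.mem_map] at ha
      obtain ⟨b, _, rfl⟩ := ha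
      exact abs_nonneg _
    have hM : ∀ s : ℝ, |s| ≤ lam → |(sec j x Q).eval s| ≤ A * B * Msup := by
      intro s hs
      rw [eval_sec]
      have hx'L : ∀ j' ∈ L.map Prod.fst, lam < |Function.update x j s j'| := by
        intro j' hj'
        have hne : j' ≠ j := fun h => hjL (by rw [← h]; exact hj')
        rw [Function.update_of_ne hne]
        exact hx j' (by simp [hj'])
      have hIH := ih P hdeg hndL (Function.update x j s) hx'L
      have hBeq : (L.map (fun jc => |(derivative^[jc.2] (Chebyshev.T ℝ (n:ℤ))).eval
          (Function.update x j s jc.1 / lam)|)).prod = B := by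
        rw [hB]
        congr 1
        apply List.map_congr_left
        intro a ha
        have hne : a.1 ≠ j := fun h => hjL (by rw [← h]; exact List.mem_map_of_mem ha)
        rw [Function.update_of_ne hne]
      have hSle : sSup (SS lam P (L.map Prod.fst) (Function.update x j s)) ≤ Msup :=
        csSup_le_csSup hbdd (SS_nonempty lam hlam P _ _)
          (SS_subset_cons lam P _ x j s hs)
      rw [hBeq] at hIH
      refine hIH.trans ?_
      rw [mul_assoc, mul_assoc]
      exact mul_le_mul_of_nonneg_left
        (mul_le_mul_of_nonneg_left hSle hB0) hA0
    have hsec : MvPolynomial.eval x (applyL ((j, c) :: L) P)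
        = (derivative^[c] (sec j x Q)).eval (x j) := by
      have h1 : applyL ((j, c) :: L) P = (fun R => MvPolynomial.pderiv j R)^[c] Q := rfl
      rw [h1, eval_pderiv_iterate]
    have huni := cheb_scaled n c (sec j x Q) ((natDegree_sec_le j x Q).trans hQdeg)
      lam hlam (A * B * Msup) hM (x j) hxj
    rw [hsec]
    refine huni.trans (le_of_eq ?_)
    simp only [List.map_cons, List.prod_cons]
    ring
  
end Master

lemma foldr_comp_apply {α : Type*} (L : List (α → α)) (x : α) :
    (L.foldr (· ∘ ·) id) x = L.foldr (fun f y => f y) x := by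
  induction L with
  | nil => rfl
  | cons f L ih => simp only [List.foldr_cons, Function.comp_apply, ih]

lemma mderiv_eq_applyL {m : ℕ} (k : Fin m → ℕ) (P : MvPolynomial (Fin m) ℝ) :
    mderiv k P = applyL (List.ofFn fun j => (j, k j)) P := by
  rw [mderiv, foldr_comp_apply, applyL]
  have h1 : (List.ofFn fun j : Fin m => (fun Q : MvPolynomial (Fin m) ℝ =>
        MvPolynomial.pderiv j Q)^[k j])
      = (List.ofFn fun j : Fin m => (j, k j)).map
          (fun jc => (fun R : MvPolynomial (Fin m) ℝ =>
            MvPolynomial.pderiv jc.1 R)^[jc.2]) := by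
    rw [List.map_ofFn]
    rfl
  rw [h1, List.foldr_map]

/-- Chebyshev-type bound for mixed partial derivatives of a real polynomial of
degree at most `n` in each variable, outside the cube `[−λ, λ]^m`. -/
theorem mixed_derivative_chebyshev_bound {m : ℕ} (n : ℕ)
    (P : MvPolynomial (Fin m) ℝ) (hdeg : ∀ j : Fin m, P.degreeOf j ≤ n)
    (lam : ℝ) (hlam : 0 < lam) (k : Fin m → ℕ)
    (x : Fin m → ℝ) (hx : ∀ j, lam < |x j|) :
    |MvPolynomial.eval x (mderiv k P)| ≤
      lam ^ (-(∑ j, k j : ℤ)) *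
        (∏ j : Fin m, |(Polynomial.derivative^[k j] (Chebyshev.T ℝ n)).eval (x j / lam)|) *
        sSup {r : ℝ | ∃ y : Fin m → ℝ, (∀ j, |y j| ≤ lam) ∧
          r = |MvPolynomial.eval y P|} := by
  have hL : ((List.ofFn fun j : Fin m => (j, k j)).map Prod.fst) = List.ofFn (fun j => j) := by
    rw [List.map_ofFn]
    rfl
  have hnd : ((List.ofFn fun j : Fin m => (j, k j)).map Prod.fst).Nodup := by
    rw [hL]
    exact List.nodup_ofFn.mpr (fun a b h => h)
  have hmem : ∀ j : Fin m, j ∈ (List.ofFn fun j : Fin m => (j, k j)).map Prod.fst := by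
    intro j
    rw [hL, List.mem_ofFn]
    exact ⟨j, rfl⟩
  have hmaster := master n lam hlam (List.ofFn fun j : Fin m => (j, k j)) P hdeg hnd x
    (fun j _ => hx j)
  rw [mderiv_eq_applyL]
  refine hmaster.trans (le_of_eq ?_)
  have h2 : ((List.ofFn fun j : Fin m => (j, k j)).map fun jc => (lam ^ jc.2)⁻¹).prod
      = lam ^ (-(∑ j, k j : ℤ)) := by
    rw [List.map_ofFn]
    rw [show ((fun jc : Fin m × ℕ => (lam ^ jc.2)⁻¹) ∘ fun j => (j, k j))
      = fun j => (lam ^ k j)⁻¹ from rfl]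
    rw [List.prod_ofFn]
    rw [zpow_neg]
    rw [show (∑ j, (k j : ℤ)) = ((∑ j, k j : ℕ) : ℤ) by push_cast; rfl]
    rw [zpow_natCast, Finset.prod_inv_distrib, Finset.prod_pow_eq_pow_sum]
  have h3 : ((List.ofFn fun j : Fin m => (j, k j)).map fun jc =>
      |(derivative^[jc.2] (Chebyshev.T ℝ (n:ℤ))).eval (x jc.1 / lam)|).prod
      = ∏ j : Fin m, |(Polynomial.derivative^[k j] (Chebyshev.T ℝ n)).eval (x j / lam)| := by
    rw [List.map_ofFn]
    rw [List.prod_ofFn]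
    rfl
  have h4 : SS lam P ((List.ofFn fun j : Fin m => (j, k j)).map Prod.fst) x
      = {r : ℝ | ∃ y : Fin m → ℝ, (∀ j, |y j| ≤ lam) ∧ r = |MvPolynomial.eval y P|} := by
    ext r
    constructor
    · rintro ⟨y, hy, rfl⟩
      exact ⟨y, fun j => (hy j).1 (hmem j), rfl⟩
    · rintro ⟨y, hy, rfl⟩
      exact ⟨y, fun j => ⟨fun _ => hy j, fun h => absurd (hmem j) h⟩, rfl⟩
  rw [h2, h3, h4]
end

section
/- Let U(y) = Σ_{k∈ℤ₊^m, k_j≤n} c_k y^k be a complex polynomial of degree at most n in each of m variables, and let 0 < A < B. Then Σ_k |c_k| ≤ [T_n((B+A+2)/(B−A))]^m · max_{y∈[A,B]^m} |U(y)|. -/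
open Polynomial Finset

namespace Stmt13

/-- Coefficients of `∏ (X - C (r j))` with `r j ≥ 0` alternate in sign and match
those of `∏ (X + C (r j))` in absolute value. -/
lemma prod_coeff_alt {ι : Type*} [DecidableEq ι] (t : Finset ι) (r : ι → ℝ)
    (hr : ∀ j ∈ t, 0 ≤ r j) :
    ∀ k : ℕ,
      (∏ j ∈ t, (X - C (r j))).coeff k
        = (-1) ^ (t.card + k) * (∏ j ∈ t, (X + C (r j))).coeff k
      ∧ 0 ≤ (∏ j ∈ t, (X + C (r j))).coeff k := by
  induction t using Finset.induction_on with
  | empty =>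
    intro k
    simp only [prod_empty, coeff_one, card_empty]
    constructor
    · rcases Nat.eq_zero_or_pos k with h | h
      · simp [h]
      · simp [Nat.pos_iff_ne_zero.mp h]
    · split <;> norm_num
  | @insert a t ha ih =>
    intro k
    have hr' : ∀ j ∈ t, 0 ≤ r j := fun j hj => hr j (mem_insert_of_mem hj)
    have hra : 0 ≤ r a := hr a (mem_insert_self a t)
    have ihk := ih hr'
    rw [prod_insert ha, prod_insert ha, card_insert_of_notMem ha]
    set P := ∏ j ∈ t, (X - C (r j)) with hP
    set Q := ∏ j ∈ t, (X + C (r j)) with hQ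
    have hmulm : ((X - C (r a)) * P).coeff k = (X * P).coeff k - r a * P.coeff k := by
      rw [sub_mul, coeff_sub, coeff_C_mul]
    have hmulp : ((X + C (r a)) * Q).coeff k = (X * Q).coeff k + r a * Q.coeff k := by
      rw [add_mul, coeff_add, coeff_C_mul]
    rcases k with _ | k
    · have h0m : (X * P).coeff 0 = 0 := by simp [mul_coeff_zero]
      have h0p : (X * Q).coeff 0 = 0 := by simp [mul_coeff_zero]
      rw [hmulm, hmulp, h0m, h0p, zero_sub, zero_add]
      obtain ⟨h1, h2⟩ := ihk 0
      constructor
      · rw [h1]; ring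
      · positivity
    · rw [hmulm, hmulp, coeff_X_mul, coeff_X_mul]
      obtain ⟨h1, h2⟩ := ihk k
      obtain ⟨h1', h2'⟩ := ihk (k + 1)
      constructor
      · rw [h1, h1']; ring
      · positivity

lemma natDegree_T_le : ∀ n : ℕ, (Chebyshev.T ℝ (n : ℤ)).natDegree ≤ n := by
  intro n
  induction n using Nat.strong_induction_on with
  | _ n ih =>
    match n with
    | 0 => simp [Chebyshev.T_zero]
    | 1 => simp [Chebyshev.T_one]
    | (n + 2) =>
      have h : ((n : ℤ) + 2) = ((n + 2 : ℕ) : ℤ) := by push_cast; ring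
      have := Chebyshev.T_add_two ℝ (n : ℤ)
      rw [h] at this
      rw [this]
      refine le_trans (natDegree_sub_le _ _) ?_
      have h1 : (2 * X * Chebyshev.T ℝ ((n : ℤ) + 1)).natDegree ≤ n + 2 := by
        refine le_trans (natDegree_mul_le) ?_
        have : ((n : ℤ) + 1) = ((n + 1 : ℕ) : ℤ) := by push_cast; ring
        rw [this]
        have h2 := ih (n + 1) (by omega)
        have h3 : (2 * X : ℝ[X]).natDegree ≤ 1 := by
          refine le_trans (natDegree_mul_le) ?_
          simp
        omega
      have h4 := ih n (by omega)
      simp only [max_le_iff]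
      exact ⟨h1, by omega⟩


section Uni
variable {n : ℕ} {A B : ℝ}

/-- Chebyshev nodes on `[A, B]`, increasing. -/
noncomputable def xnode (n : ℕ) (A B : ℝ) (i : Fin (n + 1)) : ℝ :=
  (A + B) / 2 - (B - A) / 2 * Real.cos (i * Real.pi / n)

lemma theta_mem (i : Fin (n + 1)) : (i : ℝ) * Real.pi / n ∈ Set.Icc 0 Real.pi := by
  constructor
  · positivity
  · rcases Nat.eq_zero_or_pos n with h | h
    · subst h
      have : (i : ℕ) = 0 := by omega
      simp [this, Real.pi_pos.le]
    · rw [div_le_iff₀ (by exact_mod_cast h)]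
      have hi : (i : ℝ) ≤ n := by exact_mod_cast Fin.is_le i
      nlinarith [Real.pi_pos]

lemma xnode_mem (hAB : A < B) (i : Fin (n + 1)) : xnode n A B i ∈ Set.Icc A B := by
  have h1 := Real.neg_one_le_cos ((i : ℝ) * Real.pi / n)
  have h2 := Real.cos_le_one ((i : ℝ) * Real.pi / n)
  unfold xnode
  constructor <;> nlinarith

lemma xnode_strictMono (hAB : A < B) : StrictMono (xnode n A B) := by
  intro i j hij
  rcases Nat.eq_zero_or_pos n with h | h
  · exfalso; subst h; omega
  · have hn : (0 : ℝ) < n := by exact_mod_cast h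
    have hij' : (i : ℝ) < (j : ℝ) := by exact_mod_cast hij
    have hθ : (i : ℝ) * Real.pi / n < (j : ℝ) * Real.pi / n := by
      have hpi := Real.pi_pos
      exact div_lt_div_of_pos_right (by nlinarith) hn

    have hcos := Real.strictAntiOn_cos (theta_mem i) (theta_mem j) hθ
    unfold xnode
    nlinarith

lemma xnode_pos (hA : 0 < A) (hAB : A < B) (i : Fin (n + 1)) : 0 < xnode n A B i :=
  lt_of_lt_of_le hA (xnode_mem hAB i).1

lemma basis_eq (i : Fin (n + 1)) :
    Lagrange.basis univ (xnode n A B) i =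
      C (∏ j ∈ univ.erase i, (xnode n A B i - xnode n A B j)⁻¹) *
        ∏ j ∈ univ.erase i, (X - C (xnode n A B j)) := by
  unfold Lagrange.basis Lagrange.basisDivisor
  rw [prod_mul_distrib, map_prod]

lemma card_erase_univ (i : Fin (n + 1)) : (univ.erase i).card = n := by
  rw [card_erase_of_mem (mem_univ i), card_univ, Fintype.card_fin]
  omega

lemma coeff_abs_sum (hA : 0 < A) (hAB : A < B) (i : Fin (n + 1)) :
    ∑ k ∈ range (n + 1), |(Lagrange.basis univ (xnode n A B) i).coeff k|
      = |(Lagrange.basis univ (xnode n A B) i).eval (-1)| := by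
  set x := xnode n A B with hx
  set t := univ.erase i with ht
  have hxpos : ∀ j, 0 < x j := xnode_pos hA hAB
  have halt := prod_coeff_alt t x (fun j _ => (hxpos j).le)
  set c := ∏ j ∈ t, (x i - x j)⁻¹ with hc
  set P := ∏ j ∈ t, (X - C (x j)) with hP
  set Q := ∏ j ∈ t, (X + C (x j)) with hQ
  have hQdeg : Q.natDegree ≤ n := by
    refine le_trans (natDegree_prod_le _ _) ?_
    have : ∀ j ∈ t, (X + C (x j)).natDegree = 1 := fun j _ => natDegree_X_add_C _
    rw [Finset.sum_congr rfl this, Finset.sum_const, card_erase_univ, smul_eq_mul, mul_one]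
  have habs : ∀ k, |P.coeff k| = Q.coeff k := by
    intro k
    obtain ⟨h1, h2⟩ := halt k
    rw [h1, abs_mul, abs_pow, abs_neg, abs_one, one_pow, one_mul, abs_of_nonneg h2]
  have hQsum : ∑ k ∈ range (n + 1), Q.coeff k = Q.eval 1 := by
    rw [eval_eq_sum_range' (Nat.lt_succ_of_le hQdeg)]
    simp
  have hQeval : Q.eval 1 = ∏ j ∈ t, (1 + x j) := by
    rw [hQ, eval_prod]; simp
  have hPeval : P.eval (-1) = ∏ j ∈ t, (-1 - x j) := by
    rw [hP, eval_prod]; simp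
  rw [basis_eq]
  calc ∑ k ∈ range (n + 1), |(C c * P).coeff k|
      = ∑ k ∈ range (n + 1), |c| * Q.coeff k := by
        refine Finset.sum_congr rfl fun k _ => ?_
        rw [coeff_C_mul, abs_mul, habs]
    _ = |c| * ∏ j ∈ t, (1 + x j) := by rw [← Finset.mul_sum, hQsum, hQeval]
    _ = |(C c * P).eval (-1)| := by
        rw [eval_mul, eval_C, hPeval, abs_mul, Finset.abs_prod t (fun j => (-1 : ℝ) - x j)]
        congr 1
        refine (Finset.prod_congr rfl fun j _ => ?_).symm
        rw [abs_of_neg (show (-1 : ℝ) - x j < 0 by nlinarith [hxpos j])]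
        ring

lemma eval_neg_one_sign (hA : 0 < A) (hAB : A < B) (i : Fin (n + 1)) :
    |(Lagrange.basis univ (xnode n A B) i).eval (-1)|
      = (-1 : ℝ) ^ (i : ℕ) * (Lagrange.basis univ (xnode n A B) i).eval (-1) := by
  set x := xnode n A B with hx
  set t := univ.erase i with ht
  have hxpos : ∀ j, 0 < x j := xnode_pos hA hAB
  have heval : (Lagrange.basis univ x i).eval (-1)
      = ∏ j ∈ t, ((x i - x j)⁻¹ * (-1 - x j)) := by
    rw [basis_eq, eval_mul, eval_C, eval_prod, ← Finset.prod_mul_distrib]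
    refine Finset.prod_congr rfl fun j _ => ?_
    simp
    rfl
  set f : Fin (n + 1) → ℝ := fun j => (x i - x j)⁻¹ * (-1 - x j) with hf
  have hsplit : ∀ j ∈ t, f j = (if j < i then (-1 : ℝ) else 1) * |f j| := by
    intro j hj
    have hji : j ≠ i := (mem_erase.mp hj).1
    rcases lt_or_gt_of_ne hji with h | h
    · have hxx : x j < x i := xnode_strictMono hAB h
      have hneg : f j < 0 := by
        apply mul_neg_of_pos_of_neg
        · exact inv_pos.mpr (by linarith)
        · nlinarith [hxpos j]
      rw [if_pos h, abs_of_neg hneg]; ring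
    · have hxx : x i < x j := xnode_strictMono hAB h
      have hpos : 0 < f j := by
        apply mul_pos_of_neg_of_neg
        · exact inv_neg''.mpr (by linarith)
        · nlinarith [hxpos j]
      rw [if_neg (not_lt.mpr h.le), abs_of_pos hpos]; ring
  have hfi : filter (fun j => j < i) t = Finset.Iio i := by
    ext j
    simp only [ht, mem_filter, mem_erase, mem_univ, true_and, Finset.mem_Iio, and_iff_right_iff_imp]
    exact fun h => ⟨ne_of_lt h, trivial⟩
  have hprod : ∏ j ∈ t, f j = (-1 : ℝ) ^ (i : ℕ) * ∏ j ∈ t, |f j| := by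
    rw [Finset.prod_congr rfl hsplit, Finset.prod_mul_distrib, Finset.prod_ite,
      Finset.prod_const, Finset.prod_const, hfi, Fin.card_Iio, one_pow, mul_one]
  have habs : |∏ j ∈ t, f j| = ∏ j ∈ t, |f j| := Finset.abs_prod t f
  have hsq : ((-1 : ℝ) ^ (i : ℕ)) * ((-1 : ℝ) ^ (i : ℕ)) = 1 := by
    rw [← pow_add]
    exact Even.neg_one_pow ⟨(i : ℕ), rfl⟩
  rw [heval, habs, hprod, ← mul_assoc, hsq, one_mul]

lemma interp (hAB : A < B) (f : ℝ[X]) (hf : f.degree < ((n : ℕ) + 1 : ℕ)) :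
    f = ∑ i, C (f.eval (xnode n A B i)) * Lagrange.basis univ (xnode n A B) i := by
  have hinj : Set.InjOn (xnode n A B) ↑(univ : Finset (Fin (n + 1))) :=
    (xnode_strictMono hAB).injective.injOn
  have h := Lagrange.eq_interpolate hinj (f := f) (by simpa using hf)
  conv_lhs => rw [h]
  rw [Lagrange.interpolate_apply]

lemma part1 (hAB : A < B) (k d : ℕ) (hd : d ≤ n) :
    ∑ i, (Lagrange.basis univ (xnode n A B) i).coeff k * xnode n A B i ^ d
      = if k = d then 1 else 0 := by
  have h := interp hAB (X ^ d)
    (by rw [degree_X_pow]; exact_mod_cast Nat.lt_succ_of_le hd)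
  have h2 := congrArg (fun p => p.coeff k) h
  simp only [finset_sum_coeff, coeff_C_mul, eval_pow, eval_X, coeff_X_pow] at h2
  rw [show (∑ i, (Lagrange.basis univ (xnode n A B) i).coeff k * xnode n A B i ^ d)
      = ∑ i, xnode n A B i ^ d * (Lagrange.basis univ (xnode n A B) i).coeff k from
    Finset.sum_congr rfl fun i _ => mul_comm _ _]
  exact h2.symm

lemma ell_eval (hAB : A < B) (y : ℝ) :
    (C ((A + B) / (B - A)) - C (2 / (B - A)) * X : ℝ[X]).eval y = (A + B - 2 * y) / (B - A) := by
  have : B - A ≠ 0 := by linarith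
  simp only [eval_sub, eval_C, eval_mul, eval_X]
  field_simp

lemma part2 (hA : 0 < A) (hAB : A < B) :
    ∑ i, |(Lagrange.basis univ (xnode n A B) i).eval (-1)|
      = (Chebyshev.T ℝ n).eval ((B + A + 2) / (B - A)) := by
  have hBA : B - A ≠ 0 := by linarith
  set ℓ : ℝ[X] := C ((A + B) / (B - A)) - C (2 / (B - A)) * X with hℓ
  set g : ℝ[X] := (Chebyshev.T ℝ n).comp ℓ with hg
  have hℓdeg : ℓ.natDegree ≤ 1 := by
    refine le_trans (natDegree_sub_le _ _) ?_
    simp only [natDegree_C, max_le_iff]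
    refine ⟨Nat.zero_le _, le_trans (natDegree_mul_le) ?_⟩
    simp
  have hgdeg : g.degree < ((n : ℕ) + 1 : ℕ) := by
    refine lt_of_le_of_lt degree_le_natDegree ?_
    have h1 : g.natDegree ≤ n := by
      refine le_trans (natDegree_comp_le) ?_
      have := natDegree_T_le n
      nlinarith [natDegree_T_le n, hℓdeg]
    exact_mod_cast Nat.lt_succ_of_le h1
  have hgval : ∀ i : Fin (n + 1), g.eval (xnode n A B i) = (-1 : ℝ) ^ (i : ℕ) := by
    intro i
    rw [hg, eval_comp, ell_eval hAB]
    have hx : (A + B - 2 * xnode n A B i) / (B - A) = Real.cos ((i : ℝ) * Real.pi / n) := by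
      unfold xnode
      field_simp
      ring
    rw [hx]
    rcases Nat.eq_zero_or_pos n with hn | hn
    · subst hn
      have : (i : ℕ) = 0 := by omega
      simp [Chebyshev.T_zero, this]
    · have hn' : (n : ℝ) ≠ 0 := by exact_mod_cast hn.ne'
      rw [Chebyshev.T_real_cos]
      have harg : ((n : ℤ) : ℝ) * ((i : ℝ) * Real.pi / n) = (i : ℝ) * Real.pi := by
        push_cast
        field_simp
      rw [harg]
      have := Real.cos_int_mul_pi_sub 0 (i : ℤ)
      simp only [sub_zero, Real.cos_zero, mul_one] at this
      rw [show ((i : ℕ) : ℝ) * Real.pi = (((i : ℕ) : ℤ) : ℝ) * Real.pi by push_cast; ring, this]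
      rw [show ((-1 : ℝ) ^ ((i : ℕ) : ℤ)) = (-1 : ℝ) ^ (i : ℕ) from zpow_natCast _ _]
  have h := interp hAB g hgdeg
  have he := congrArg (fun p => p.eval (-1)) h
  simp only [eval_finset_sum, eval_mul, eval_C] at he
  have hL : ∑ i, |(Lagrange.basis univ (xnode n A B) i).eval (-1)| = g.eval (-1) := by
    rw [he]
    refine Finset.sum_congr rfl fun i _ => ?_
    rw [eval_neg_one_sign hA hAB i, hgval i]
  rw [hL, hg, eval_comp, ell_eval hAB]
  norm_num
  ring_nf

/-- The packaged univariate interpolation data. -/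
lemma key_uni (n : ℕ) {A B : ℝ} (hA : 0 < A) (hAB : A < B) :
    ∃ (x : Fin (n + 1) → ℝ) (w : ℕ → Fin (n + 1) → ℝ),
      (∀ i, x i ∈ Set.Icc A B) ∧
      (∀ k d : ℕ, d ≤ n → ∑ i, w k i * x i ^ d = if k = d then 1 else 0) ∧
      (∑ k ∈ Finset.range (n + 1), ∑ i, |w k i|)
        ≤ (Chebyshev.T ℝ n).eval ((B + A + 2) / (B - A)) := by
  refine ⟨xnode n A B, fun k i => (Lagrange.basis univ (xnode n A B) i).coeff k,
    xnode_mem hAB, fun k d hd => part1 hAB k d hd, ?_⟩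
  rw [Finset.sum_comm]
  refine le_of_eq ?_
  calc ∑ i, ∑ k ∈ Finset.range (n + 1), |(Lagrange.basis univ (xnode n A B) i).coeff k|
      = ∑ i, |(Lagrange.basis univ (xnode n A B) i).eval (-1)| :=
        Finset.sum_congr rfl fun i _ => coeff_abs_sum hA hAB i
    _ = (Chebyshev.T ℝ n).eval ((B + A + 2) / (B - A)) := part2 hA hAB

end Uni
end Stmt13

/-- bound for the sum of moduli of coefficients of a multivariate complex
polynomial of degree at most `n` in each variable, in terms of its sup norm on `[A,B]^m`. -/
theorem coeff_sum_bound_Icc {m n : ℕ} (U : MvPolynomial (Fin m) ℂ)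
    (hdeg : ∀ j : Fin m, U.degreeOf j ≤ n) (A B : ℝ) (hA : 0 < A) (hAB : A < B) :
    ∑ k ∈ U.support, ‖U.coeff k‖ ≤
      ((Chebyshev.T ℝ n).eval ((B + A + 2) / (B - A))) ^ m *
        sSup {r : ℝ | ∃ y : Fin m → ℝ, (∀ j, y j ∈ Set.Icc A B) ∧
          r = ‖MvPolynomial.eval (fun j => (y j : ℂ)) U‖} := by
  classical
  obtain ⟨x, w, hxmem, hw1, hw2⟩ := Stmt13.key_uni n hA hAB
  set T : ℝ := (Chebyshev.T ℝ n).eval ((B + A + 2) / (B - A)) with hT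
  set S : Set ℝ := {r : ℝ | ∃ y : Fin m → ℝ, (∀ j, y j ∈ Set.Icc A B) ∧
      r = ‖MvPolynomial.eval (fun j => (y j : ℂ)) U‖} with hSdef
  have hbdd : BddAbove S := by
    refine ⟨∑ k ∈ U.support, ‖U.coeff k‖ * (max 1 B) ^ (∑ j, k j), ?_⟩
    rintro r ⟨y, hy, rfl⟩
    rw [MvPolynomial.eval_eq']
    refine le_trans (norm_sum_le _ _) (Finset.sum_le_sum fun k _ => ?_)
    rw [norm_mul]
    refine mul_le_mul_of_nonneg_left ?_ (norm_nonneg _)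
    rw [norm_prod, ← Finset.prod_pow_eq_pow_sum]
    refine Finset.prod_le_prod (fun j _ => norm_nonneg _) fun j _ => ?_
    rw [norm_pow, Complex.norm_real, Real.norm_eq_abs]
    refine pow_le_pow_left₀ (abs_nonneg _) ?_ _
    rw [abs_of_pos (lt_of_lt_of_le hA (hy j).1)]
    exact le_trans (hy j).2 (le_max_right 1 B)
  have hM : ∀ y : Fin m → ℝ, (∀ j, y j ∈ Set.Icc A B) →
      ‖MvPolynomial.eval (fun j => (y j : ℂ)) U‖ ≤ sSup S :=
    fun y hy => le_csSup hbdd ⟨y, hy, rfl⟩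
  have hM0 : 0 ≤ sSup S :=
    le_trans (norm_nonneg _) (hM (fun _ => A) (fun j => ⟨le_refl A, hAB.le⟩))
  have hT0 : 0 ≤ T :=
    le_trans (Finset.sum_nonneg fun k _ => Finset.sum_nonneg fun i _ => abs_nonneg _) hw2
  have hdegk : ∀ k ∈ U.support, ∀ j, k j ≤ n := by
    intro k hk j
    refine le_trans ?_ (hdeg j)
    rw [MvPolynomial.degreeOf_eq_sup]
    exact Finset.le_sup (f := fun k' => k' j) hk
  have hw1' : ∀ (a d : ℕ), d ≤ n →
      ∑ b : Fin (n + 1), (w a b : ℂ) * (x b : ℂ) ^ d = (if a = d then 1 else 0 : ℂ) := by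
    intro a d hd
    have h := congrArg (fun r : ℝ => (r : ℂ)) (hw1 a d hd)
    push_cast at h
    convert h using 2
    split <;> simp
  have hrep : ∀ k ∈ U.support, U.coeff k =
      ∑ i : Fin m → Fin (n + 1), (∏ j, (w (k j) (i j) : ℂ)) *
        MvPolynomial.eval (fun j => (x (i j) : ℂ)) U := by
    intro k hk
    symm
    calc (∑ i : Fin m → Fin (n + 1), (∏ j, (w (k j) (i j) : ℂ)) *
            MvPolynomial.eval (fun j => (x (i j) : ℂ)) U)
        = ∑ i : Fin m → Fin (n + 1), ∑ k' ∈ U.support,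
            U.coeff k' * ∏ j, ((w (k j) (i j) : ℂ) * (x (i j) : ℂ) ^ (k' j)) := by
          refine Finset.sum_congr rfl fun i _ => ?_
          rw [MvPolynomial.eval_eq', Finset.mul_sum]
          refine Finset.sum_congr rfl fun k' _ => ?_
          rw [Finset.prod_mul_distrib]
          ring
      _ = ∑ k' ∈ U.support, U.coeff k' *
            ∏ j, (∑ b : Fin (n + 1), (w (k j) b : ℂ) * (x b : ℂ) ^ (k' j)) := by
          rw [Finset.sum_comm]
          refine Finset.sum_congr rfl fun k' _ => ?_
          rw [← Finset.mul_sum]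
          congr 1
          exact (Fintype.prod_sum (fun j b => (w (k j) b : ℂ) * (x b : ℂ) ^ (k' j))).symm
      _ = ∑ k' ∈ U.support, U.coeff k' * (if k = k' then 1 else 0 : ℂ) := by
          refine Finset.sum_congr rfl fun k' hk' => ?_
          congr 1
          rw [Finset.prod_congr rfl fun j (_ : j ∈ univ) => hw1' (k j) (k' j) (hdegk k' hk' j)]
          by_cases hkk : k = k'
          · subst hkk; simp
          · rw [if_neg hkk]
            obtain ⟨j, hj⟩ : ∃ j, k j ≠ k' j := by
              by_contra hall
              push_neg at hall
              exact hkk (Finsupp.ext hall)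
            exact Finset.prod_eq_zero (Finset.mem_univ j) (if_neg hj)
      _ = U.coeff k := by
          simp only [mul_ite, mul_one, mul_zero]
          rw [Finset.sum_ite_eq U.support k (fun k' => U.coeff k'), if_pos hk]
  have habs : ∀ k ∈ U.support, ‖U.coeff k‖ ≤
      ∑ i : Fin m → Fin (n + 1), (∏ j, |w (k j) (i j)|) * sSup S := by
    intro k hk
    rw [hrep k hk]
    refine le_trans (norm_sum_le _ _) (Finset.sum_le_sum fun i _ => ?_)
    rw [norm_mul, norm_prod]
    rw [Finset.prod_congr rfl fun j (_ : j ∈ univ) =>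
      ((Complex.norm_real (w (k j) (i j))).trans (Real.norm_eq_abs _) : ‖((w (k j) (i j) : ℝ) : ℂ)‖ = _)]
    exact mul_le_mul_of_nonneg_left (hM (fun j => x (i j)) (fun j => hxmem (i j)))
      (Finset.prod_nonneg fun j _ => abs_nonneg _)
  have hover : (∑ k ∈ U.support, ∑ i : Fin m → Fin (n + 1), ∏ j, |w (k j) (i j)|) ≤ T ^ m := by
    set F : (Fin m → Fin (n + 1)) → ℝ := fun κ => ∑ i : Fin m → Fin (n + 1), ∏ j, |w (κ j) (i j)|
      with hF
    have hF0 : ∀ κ, 0 ≤ F κ :=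
      fun κ => Finset.sum_nonneg fun i _ => Finset.prod_nonneg fun j _ => abs_nonneg _
    set e : (Fin m →₀ ℕ) → (Fin m → Fin (n + 1)) := fun k j => ⟨min (k j) n, by omega⟩ with he
    have hstep1 : (∑ k ∈ U.support, ∑ i : Fin m → Fin (n + 1), ∏ j, |w (k j) (i j)|)
        = ∑ k ∈ U.support, F (e k) := by
      refine Finset.sum_congr rfl fun k hk => ?_
      simp only [hF, he]
      refine Finset.sum_congr rfl fun i _ => Finset.prod_congr rfl fun j _ => ?_
      rw [min_eq_left (hdegk k hk j)]
    have hinj : Set.InjOn e ↑U.support := by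
      intro k hk k' hk' hkk
      refine Finsupp.ext fun j => ?_
      have := congrArg (fun f => ((f j : Fin (n + 1)) : ℕ)) hkk
      simpa [he, min_eq_left (hdegk k hk j), min_eq_left (hdegk k' hk' j)] using this
    have hstep2 : ∑ k ∈ U.support, F (e k) = ∑ κ ∈ U.support.image e, F κ :=
      (Finset.sum_image fun k hk k' hk' h => hinj hk hk' h).symm
    have hstep3 : ∑ κ ∈ U.support.image e, F κ ≤ ∑ κ : Fin m → Fin (n + 1), F κ :=
      Finset.sum_le_sum_of_subset_of_nonneg (Finset.subset_univ _) fun κ _ _ => hF0 κ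
    have hstep4 : ∑ κ : Fin m → Fin (n + 1), F κ
        = (∑ a : Fin (n + 1), ∑ b : Fin (n + 1), |w (a : ℕ) b|) ^ m := by
      have h1 : ∀ κ : Fin m → Fin (n + 1),
          F κ = ∏ j, (∑ b : Fin (n + 1), |w ((κ j : ℕ)) b|) :=
        fun κ => (Fintype.prod_sum (fun j b => |w ((κ j : ℕ)) b|)).symm
      have h2 : (∑ κ : Fin m → Fin (n + 1), ∏ j, (∑ b : Fin (n + 1), |w ((κ j : ℕ)) b|))
          = ∏ _j : Fin m, (∑ a : Fin (n + 1), ∑ b : Fin (n + 1), |w ((a : ℕ)) b|) :=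
        (Fintype.prod_sum (fun (_ : Fin m) (a : Fin (n + 1)) =>
          ∑ b : Fin (n + 1), |w ((a : ℕ)) b|)).symm
      rw [Finset.sum_congr rfl fun κ _ => h1 κ, h2]
      rw [Finset.prod_const, Finset.card_univ, Fintype.card_fin]
    have hstep5 : (∑ a : Fin (n + 1), ∑ b : Fin (n + 1), |w (a : ℕ) b|) ≤ T := by
      rw [Fin.sum_univ_eq_sum_range (fun a => ∑ b : Fin (n + 1), |w a b|)]
      exact hw2
    calc (∑ k ∈ U.support, ∑ i : Fin m → Fin (n + 1), ∏ j, |w (k j) (i j)|)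
        = ∑ κ ∈ U.support.image e, F κ := hstep1.trans hstep2
      _ ≤ ∑ κ : Fin m → Fin (n + 1), F κ := hstep3
      _ = (∑ a : Fin (n + 1), ∑ b : Fin (n + 1), |w (a : ℕ) b|) ^ m := hstep4
      _ ≤ T ^ m := pow_le_pow_left₀ (Finset.sum_nonneg fun a _ =>
          Finset.sum_nonneg fun b _ => abs_nonneg _) hstep5 m
  calc ∑ k ∈ U.support, ‖U.coeff k‖
      ≤ ∑ k ∈ U.support, ∑ i : Fin m → Fin (n + 1), (∏ j, |w (k j) (i j)|) * sSup S :=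
        Finset.sum_le_sum habs
    _ = (∑ k ∈ U.support, ∑ i : Fin m → Fin (n + 1), ∏ j, |w (k j) (i j)|) * sSup S := by
        rw [Finset.sum_mul]
        exact Finset.sum_congr rfl fun k _ => (Finset.sum_mul _ _ _).symm
    _ ≤ T ^ m * sSup S := mul_le_mul_of_nonneg_right hover hM0
end
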